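/- arXiv:1103.1131 — 6 statements merged into one kernel-verified Lean document; each statement's English description precedes it below -/
import Mathlib

section
/- Under the hypotheses (EC-1)–(EC-4), the existence of an auxiliary seminorm, and the hylomorphy condition inf{ E(u)/|C(u)| : C(u) ≠ 0 } < Λ₀, there exist δ̄ > 0 and, for every δ ∈ (0, δ̄), a value e_δ ∈ ℝ and a charge value c_δ ∈ ℝ^l with c_δ ≠ 0 such that e_δ = min{ E(u) : C(u) = c_δ }, this minimum is attained, and the set Γ_δ = { u ∈ X : E(u) = e_δ, C(u) = c_δ } is nonempty, invariant under the flow γ, stable, and G-compact; consequently every u ∈ Γ_δ is a hylomorphic soliton. -/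
open Filter Topology Metric

/-- A sequence `u` in `X` is `G`-compact if there are a subsequence `u ∘ φ` and group
elements `g k` such that `g k • u (φ k)` converges. -/
def GCompactSeq {X G : Type*} [TopologicalSpace X] [Group G] [MulAction G X]
    (u : ℕ → X) : Prop :=
  ∃ φ : ℕ → ℕ, StrictMono φ ∧ ∃ g : ℕ → G, ∃ x : X,
    Tendsto (fun k => g k • u (φ k)) atTop (𝓝 x)

/-- A set `Γ` is invariant under the flow `γ`. -/
def Invariant {X : Type*} (γ : ℝ → X → X) (Γ : Set X) : Prop :=
  ∀ u ∈ Γ, ∀ t : ℝ, γ t u ∈ Γ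

/-- An invariant set `Γ` is stable. -/
def Stable {X : Type*} [MetricSpace X] (γ : ℝ → X → X) (Γ : Set X) : Prop :=
  ∀ ε > 0, ∃ δ > 0, ∀ u : X, infDist u Γ ≤ δ → ∀ t : ℝ, 0 ≤ t → infDist (γ t u) Γ ≤ ε

/-- A closed `G`-invariant set `Γ` is `G`-compact if every sequence in `Γ` is
`G`-compact. -/
def GCompactSet {X G : Type*} [TopologicalSpace X] [Group G] [MulAction G X]
    (Γ : Set X) : Prop :=
  IsClosed Γ ∧ (∀ g : G, ∀ u ∈ Γ, g • u ∈ Γ) ∧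
    ∀ u : ℕ → X, (∀ n, u n ∈ Γ) → GCompactSeq (G := G) u

/-- A state `u` is a soliton if its whole trajectory lies in a set `Γ` which is
invariant, stable and `G`-compact. -/
def IsSoliton {X G : Type*} [MetricSpace X] [Group G] [MulAction G X]
    (γ : ℝ → X → X) (u : X) : Prop :=
  ∃ Γ : Set X, (∀ t : ℝ, γ t u ∈ Γ) ∧ Invariant γ Γ ∧ Stable γ Γ ∧
    GCompactSet (G := G) Γ

/-- A soliton `u` is hylomorphic if the set `Γ` can be taken of the form
`Γ = {v | E v = e₀ ∧ C v = c₀}` where `e₀ = min {E v | C v = c₀}`. -/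
def IsHylomorphicSoliton {X G : Type*} [MetricSpace X] [Group G] [MulAction G X] {l : ℕ}
    (γ : ℝ → X → X) (E : X → ℝ) (C : X → EuclideanSpace ℝ (Fin l)) (u : X) : Prop :=
  ∃ (e₀ : ℝ) (c₀ : EuclideanSpace ℝ (Fin l)),
    (∃ w : X, C w = c₀ ∧ E w = e₀) ∧ (∀ w : X, C w = c₀ → e₀ ≤ E w) ∧
    (∀ t : ℝ, γ t u ∈ {v : X | E v = e₀ ∧ C v = c₀}) ∧
    Invariant γ {v : X | E v = e₀ ∧ C v = c₀} ∧
    Stable γ {v : X | E v = e₀ ∧ C v = c₀} ∧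
    GCompactSet (G := G) {v : X | E v = e₀ ∧ C v = c₀}

/-- A functional `F` on `X` has the splitting property if for every `u ∈ X` and every
sequence `(w n)` converging weakly to `0`, `F (u + w n) = F u + F (w n) + o(1)`. -/
def SplittingProperty {X : Type*} [NormedAddCommGroup X] [NormedSpace ℝ X]
    (F : X → ℝ) : Prop :=
  ∀ (u : X) (w : ℕ → X),
    (∀ f : X →L[ℝ] ℝ, Tendsto (fun n => f (w n)) atTop (𝓝 0)) →
    Tendsto (fun n => F (u + w n) - F u - F (w n)) atTop (𝓝 0)

set_option maxHeartbeats 1600000 in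
/-- Theorem `astra1`: Under (EC-1)–(EC-4), the existence of an auxiliary
seminorm, and the hylomorphy condition `inf {E u / |C u| : C u ≠ 0} < Λ₀`, there exist
`δ̄ > 0` and, for every `δ ∈ (0, δ̄)`, a value `e_δ ∈ ℝ` and a charge `c_δ ≠ 0` such
that `e_δ = min {E u | C u = c_δ}` is attained and the set
`Γ_δ = {u | E u = e_δ ∧ C u = c_δ}` is nonempty, invariant, stable and `G`-compact;
consequently every `u ∈ Γ_δ` is a hylomorphic soliton. -/
theorem existence_of_hylomorphic_solitons {X G : Type*}
    [NormedAddCommGroup X] [NormedSpace ℝ X] [CompleteSpace X]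
    [Group G] [MulAction G X] {l : ℕ}
    -- G is a group of linear isometries of X
    (hGlin : ∀ g : G, IsLinearMap ℝ (fun x : X => g • x))
    (hGnorm : ∀ (g : G) (x : X), ‖g • x‖ = ‖x‖)
    -- the dynamical system (X, γ)
    (γ : ℝ → X → X)
    (hγ0 : ∀ u : X, γ 0 u = u)
    (hγadd : ∀ (t s : ℝ) (u : X), γ (t + s) u = γ t (γ s u))
    -- (EC-1): E, C are continuous integrals of motion vanishing at 0
    (E : X → ℝ) (C : X → EuclideanSpace ℝ (Fin l)) (hl : 1 ≤ l)
    (hEcont : Continuous E) (hCcont : Continuous C)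
    (hEflow : ∀ (t : ℝ) (u : X), E (γ t u) = E u)
    (hCflow : ∀ (t : ℝ) (u : X), C (γ t u) = C u)
    (hE0 : E 0 = 0) (hC0 : C 0 = 0)
    -- (EC-2): E and C are G-invariant
    (hEG : ∀ (g : G) (u : X), E (g • u) = E u)
    (hCG : ∀ (g : G) (u : X), C (g • u) = C u)
    -- (EC-3): coercivity
    (a s : ℝ) (ha : 0 ≤ a) (hs : 1 ≤ s)
    (hcoer₁ : ∀ u : X, 0 ≤ E u + a * ‖C u‖ ^ s)
    (hcoer₂ : ∀ u : ℕ → X, Tendsto (fun n => ‖u n‖) atTop atTop →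
      Tendsto (fun n => E (u n) + a * ‖C (u n)‖ ^ s) atTop atTop)
    (hcoer₃ : ∀ u : ℕ → X,
      Tendsto (fun n => E (u n) + a * ‖C (u n)‖ ^ s) atTop (𝓝 0) →
      Tendsto u atTop (𝓝 0))
    -- (EC-4): splitting property
    (hEsplit : SplittingProperty E)
    (hCsplit : SplittingProperty (fun u => ‖C u‖))
    -- the auxiliary seminorm
    (p : Seminorm ℝ X)
    (haux : ∀ u : ℕ → X, (∃ R : ℝ, ∀ n, ‖u n‖ ≤ R) →
      (∃ δ' > 0, ∀ n, δ' ≤ p (u n)) →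
      ∃ φ : ℕ → ℕ, StrictMono φ ∧ ∃ g : ℕ → G, ∃ ubar : X, ubar ≠ 0 ∧
        ∀ f : X →L[ℝ] ℝ,
          Tendsto (fun k => f (g k • u (φ k))) atTop (𝓝 (f ubar)))
    -- Λ₀ and the hylomorphy condition
    (Λ₀ : EReal)
    (hΛ₀ : Λ₀ = ⨆ (r : ℝ) (_ : 0 < r),
      ⨅ u : {u : X // C u ≠ 0 ∧ p u < r}, ((E u.1 / ‖C u.1‖ : ℝ) : EReal))
    (hhylo : (⨅ u : {u : X // C u ≠ 0}, ((E u.1 / ‖C u.1‖ : ℝ) : EReal)) < Λ₀) :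
    ∃ δbar : ℝ, 0 < δbar ∧ ∀ δ : ℝ, 0 < δ → δ < δbar →
      ∃ (eδ : ℝ) (cδ : EuclideanSpace ℝ (Fin l)), cδ ≠ 0 ∧
        (∃ u : X, C u = cδ ∧ E u = eδ) ∧
        (∀ u : X, C u = cδ → eδ ≤ E u) ∧
        {u : X | E u = eδ ∧ C u = cδ}.Nonempty ∧
        Invariant γ {u : X | E u = eδ ∧ C u = cδ} ∧
        Stable γ {u : X | E u = eδ ∧ C u = cδ} ∧
        GCompactSet (G := G) {u : X | E u = eδ ∧ C u = cδ} ∧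
        ∀ u ∈ {u : X | E u = eδ ∧ C u = cδ},
          IsHylomorphicSoliton (G := G) γ E C u := by
  classical
  have hspos : (0:ℝ) < s := lt_of_lt_of_le one_pos hs
  -- hylomorphy witness
  obtain ⟨u₀, hu₀lt⟩ : ∃ u : {u : X // C u ≠ 0}, ((E u.1 / ‖C u.1‖ : ℝ) : EReal) < Λ₀ :=
    iInf_lt_iff.mp hhylo
  have hσ₀ : (0:ℝ) < ‖C u₀.1‖ := norm_pos_iff.mpr u₀.2
  set σ₀ : ℝ := ‖C u₀.1‖ with hσ₀def
  set lam₀ : ℝ := E u₀.1 / σ₀ with hlam₀def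
  set K₀ : ℝ := σ₀ + 1 with hK₀def
  have hσ₀K₀ : σ₀ ≤ K₀ := by rw [hK₀def]; linarith
  have hK₀pos : 0 < K₀ := by rw [hK₀def]; linarith
  -- basic coercivity consequences
  have hElb : ∀ v : X, -(a * ‖C v‖ ^ s) ≤ E v := fun v => by linarith [hcoer₁ v]
  have hEnn : ∀ v : X, C v = 0 → 0 ≤ E v := by
    intro v hv
    have h := hcoer₁ v
    rw [hv, norm_zero, Real.zero_rpow hspos.ne', mul_zero, add_zero] at h
    exact h
  -- the function m
  set m : ℝ → ℝ := fun t => sInf {x : ℝ | ∃ v : X, C v ≠ 0 ∧ ‖C v‖ ≤ t ∧ E v / ‖C v‖ = x}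
    with hmdef
  have hSne : ∀ t : ℝ, σ₀ ≤ t →
      {x : ℝ | ∃ v : X, C v ≠ 0 ∧ ‖C v‖ ≤ t ∧ E v / ‖C v‖ = x}.Nonempty :=
    fun t ht => ⟨lam₀, u₀.1, u₀.2, ht, rfl⟩
  set B : ℝ := a * (max 1 (K₀ + 1)) ^ (s - 1) with hBdef
  have hSbdd : ∀ t : ℝ, t ≤ K₀ + 1 →
      ∀ x ∈ {x : ℝ | ∃ v : X, C v ≠ 0 ∧ ‖C v‖ ≤ t ∧ E v / ‖C v‖ = x}, -B ≤ x := by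
    intro t ht x hx
    obtain ⟨v, hv0, hvt, rfl⟩ := hx
    have hpos : (0:ℝ) < ‖C v‖ := norm_pos_iff.mpr hv0
    have h2 : ‖C v‖ ^ (s - 1) ≤ (max 1 (K₀ + 1)) ^ (s - 1) :=
      Real.rpow_le_rpow (norm_nonneg _) (le_trans (le_trans hvt ht) (le_max_right _ _))
        (by linarith)
    have h5 : ‖C v‖ ^ (s - 1) * ‖C v‖ = ‖C v‖ ^ s := by
      have h := Real.rpow_add hpos (s - 1) 1
      rw [Real.rpow_one] at h
      rw [← h]
      congr 1
      ring
    have h6 : -(a * ‖C v‖ ^ s) ≤ E v := hElb v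
    have h7 : a * (‖C v‖ ^ (s - 1) * ‖C v‖) ≤ a * ((max 1 (K₀ + 1)) ^ (s - 1) * ‖C v‖) :=
      mul_le_mul_of_nonneg_left (mul_le_mul_of_nonneg_right h2 hpos.le) ha
    rw [h5] at h7
    have h8 : a * ((max 1 (K₀ + 1)) ^ (s - 1) * ‖C v‖) = B * ‖C v‖ := by rw [hBdef]; ring
    rw [h8] at h7
    rw [le_div_iff₀ hpos]
    linarith
  have hSbddBelow : ∀ t : ℝ, t ≤ K₀ + 1 →
      BddBelow {x : ℝ | ∃ v : X, C v ≠ 0 ∧ ‖C v‖ ≤ t ∧ E v / ‖C v‖ = x} :=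
    fun t ht => ⟨-B, fun x hx => hSbdd t ht x hx⟩
  have hmanti : ∀ t t' : ℝ, σ₀ ≤ t → t ≤ t' → t' ≤ K₀ + 1 → m t' ≤ m t := by
    intro t t' ht htt' ht'
    apply csInf_le_csInf (hSbddBelow t' ht') (hSne t ht)
    rintro x ⟨v, hv0, hvt, rfl⟩
    exact ⟨v, hv0, le_trans hvt htt', rfl⟩
  have hmle : ∀ t : ℝ, σ₀ ≤ t → t ≤ K₀ + 1 → m t ≤ lam₀ := by
    intro t ht ht'
    exact csInf_le (hSbddBelow t ht') ⟨u₀.1, u₀.2, ht, rfl⟩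
  -- lam
  set lam : ℝ := sSup (m '' Set.Ioc K₀ (K₀ + 1)) with hlamdef
  have himg_ne : (m '' Set.Ioc K₀ (K₀ + 1)).Nonempty :=
    ⟨m (K₀ + 1), ⟨K₀ + 1, ⟨lt_add_one K₀, le_refl _⟩, rfl⟩⟩
  have himg_bdd : BddAbove (m '' Set.Ioc K₀ (K₀ + 1)) := by
    refine ⟨lam₀, ?_⟩
    rintro x ⟨t, ht, rfl⟩
    exact hmle t (by linarith [ht.1, hσ₀K₀]) ht.2
  have hlamle : lam ≤ lam₀ := by
    apply csSup_le himg_ne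
    rintro x ⟨t, ht, rfl⟩
    exact hmle t (by linarith [ht.1, hσ₀K₀]) ht.2
  have hlamlt : (lam : EReal) < Λ₀ :=
    lt_of_le_of_lt (EReal.coe_le_coe_iff.mpr hlamle) hu₀lt
  have hm_mem_le : ∀ t ∈ Set.Ioc K₀ (K₀ + 1), m t ≤ lam :=
    fun t ht => le_csSup himg_bdd ⟨t, ht, rfl⟩
  -- pointwise ratio bound at radius t
  have hratio_t : ∀ t ∈ Set.Ioc K₀ (K₀ + 1), ∀ v : X, ‖C v‖ ≤ t → m t * ‖C v‖ ≤ E v := by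
    intro t ht v hv
    rcases eq_or_ne (C v) 0 with h0 | h0
    · rw [h0, norm_zero, mul_zero]
      exact hEnn v h0
    · have hpos : (0:ℝ) < ‖C v‖ := norm_pos_iff.mpr h0
      have hm : m t ≤ E v / ‖C v‖ := csInf_le (hSbddBelow t ht.2) ⟨v, h0, hv, rfl⟩
      calc m t * ‖C v‖ ≤ E v / ‖C v‖ * ‖C v‖ := mul_le_mul_of_nonneg_right hm hpos.le
        _ = E v := div_mul_cancel₀ _ hpos.ne'
  -- limit lower bound
  have hLB : ∀ (w : ℕ → X) (β L : ℝ), β ≤ K₀ →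
      Tendsto (fun k => ‖C (w k)‖) atTop (𝓝 β) →
      Tendsto (fun k => E (w k)) atTop (𝓝 L) → lam * β ≤ L := by
    intro w β L hβK hCw hEw
    have hβ0 : 0 ≤ β := ge_of_tendsto hCw (Eventually.of_forall fun k => norm_nonneg _)
    have key : ∀ ε : ℝ, 0 < ε → lam * β ≤ L + ε * β := by
      intro ε hε
      obtain ⟨x, hx, hxlt⟩ := exists_lt_of_lt_csSup himg_ne (show lam - ε < lam by linarith)
      obtain ⟨t, ht, rfl⟩ := hx
      have hβt : β < t := lt_of_le_of_lt hβK ht.1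
      have hev : ∀ᶠ k in atTop, m t * ‖C (w k)‖ ≤ E (w k) := by
        filter_upwards [hCw.eventually_lt_const hβt] with k hk
        exact hratio_t t ht (w k) hk.le
      have hmtβ : m t * β ≤ L :=
        le_of_tendsto_of_tendsto (hCw.const_mul (m t)) hEw hev
      nlinarith [hmtβ, hxlt, hβ0]
    rcases eq_or_lt_of_le hβ0 with h | h
    · have := key 1 one_pos
      rw [← h] at this ⊢
      simpa using this
    · refine le_of_forall_pos_le_add fun ε' hε' => ?_
      have h2 := key (ε' / β) (div_pos hε' h)
      rw [div_mul_cancel₀ _ h.ne'] at h2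
      exact h2
  -- bounded sequences
  have hbdd_of_tendsto : ∀ (u : ℕ → X) (x : X), Tendsto u atTop (𝓝 x) →
      ∃ R : ℝ, ∀ n, ‖u n‖ ≤ R := by
    intro u x hu
    have h1 : Tendsto (fun n => ‖u n‖) atTop (𝓝 ‖x‖) := (continuous_norm.tendsto x).comp hu
    obtain ⟨R, hR⟩ := h1.bddAbove_range
    exact ⟨R, fun n => hR (Set.mem_range_self n)⟩
  have hBDD : ∀ (u : ℕ → X) (L : ℝ),
      Tendsto (fun n => E (u n) + a * ‖C (u n)‖ ^ s) atTop (𝓝 L) →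
      ∃ R : ℝ, ∀ n, ‖u n‖ ≤ R := by
    intro u L hL
    by_contra hcon
    push_neg at hcon
    choose ψ hψ using fun j : ℕ => hcon (j : ℝ)
    have h2 : Tendsto (fun j => ‖u (ψ j)‖) atTop atTop :=
      tendsto_atTop_mono (fun j => (hψ j).le) tendsto_natCast_atTop_atTop
    have h3 := hcoer₂ (fun j => u (ψ j)) h2
    obtain ⟨R, hR⟩ := hL.bddAbove_range
    obtain ⟨j, hj⟩ := (tendsto_atTop.mp h3 (R + 1)).exists
    have h4 : E (u (ψ j)) + a * ‖C (u (ψ j))‖ ^ s ≤ R := hR (Set.mem_range_self (ψ j))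
    linarith
  -- no vanishing
  have hnovan : ∀ u : ℕ → X, (∃ R : ℝ, ∀ n, ‖u n‖ ≤ R) → (∀ᶠ n in atTop, C (u n) ≠ 0) →
      Tendsto (fun n => E (u n) / ‖C (u n)‖) atTop (𝓝 lam) →
      ∃ φ : ℕ → ℕ, StrictMono φ ∧ ∃ g : ℕ → G, ∃ ubar : X, ubar ≠ 0 ∧
        ∀ f : X →L[ℝ] ℝ, Tendsto (fun k => f (g k • u (φ k))) atTop (𝓝 (f ubar)) := by
    intro u hbd hC hrat
    by_cases hp : Tendsto (fun n => p (u n)) atTop (𝓝 0)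
    · exfalso
      have hle : Λ₀ ≤ (lam : EReal) := by
        rw [hΛ₀]
        refine iSup_le fun r => iSup_le fun hr => ?_
        have hten : Tendsto (fun n => ((E (u n) / ‖C (u n)‖ : ℝ) : EReal)) atTop
            (𝓝 (lam : EReal)) := (continuous_coe_real_ereal.tendsto lam).comp hrat
        refine ge_of_tendsto hten ?_
        filter_upwards [hC, hp.eventually_lt_const hr] with n hn1 hn2
        exact iInf_le
          (fun v : {v : X // C v ≠ 0 ∧ p v < r} => ((E v.1 / ‖C v.1‖ : ℝ) : EReal))
          ⟨u n, hn1, hn2⟩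
      exact absurd (lt_of_le_of_lt hle hlamlt) (lt_irrefl _)
    · rw [Metric.tendsto_atTop] at hp
      push_neg at hp
      obtain ⟨ε, hε, hfr⟩ := hp
      have hfr' : ∃ᶠ n in atTop, ε ≤ p (u n) := by
        rw [frequently_atTop]
        intro N
        obtain ⟨n, hn1, hn2⟩ := hfr N
        refine ⟨n, hn1, ?_⟩
        rwa [Real.dist_eq, sub_zero, abs_of_nonneg (apply_nonneg p _)] at hn2
      obtain ⟨φ₁, hφ₁, hP⟩ := extraction_of_frequently_atTop hfr'
      obtain ⟨R, hR⟩ := hbd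
      obtain ⟨φ₂, hφ₂, g, ubar, hu0, hw⟩ :=
        haux (fun k => u (φ₁ k)) ⟨R, fun k => hR _⟩ ⟨ε, hε, fun k => hP k⟩
      exact ⟨φ₁ ∘ φ₂, hφ₁.comp hφ₂, g, ubar, hu0, hw⟩
  -- strong convergence to zero is impossible for ratio-minimizing sequences
  have hzero : ∀ u : ℕ → X, Tendsto u atTop (𝓝 0) → (∀ᶠ n in atTop, C (u n) ≠ 0) →
      Tendsto (fun n => E (u n) / ‖C (u n)‖) atTop (𝓝 lam) → False := by
    intro u hu hC hrat
    obtain ⟨R, hR⟩ := hbdd_of_tendsto u 0 hu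
    obtain ⟨φ, hφ, g, ubar, hu0, hw⟩ := hnovan u ⟨R, hR⟩ hC hrat
    have hstrong : Tendsto (fun k => g k • u (φ k)) atTop (𝓝 0) := by
      rw [tendsto_zero_iff_norm_tendsto_zero]
      have h1 : Tendsto (fun k => ‖u (φ k)‖) atTop (𝓝 0) :=
        (tendsto_zero_iff_norm_tendsto_zero.mp (hu.comp hφ.tendsto_atTop))
      simpa [hGnorm] using h1
    refine hu0 (NormedSpace.eq_zero_of_forall_dual_eq_zero ℝ fun f => ?_)
    have h2 : Tendsto (fun k => f (g k • u (φ k))) atTop (𝓝 (f 0)) :=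
      (f.continuous.tendsto 0).comp hstrong
    have h3 := tendsto_nhds_unique (hw f) h2
    simpa using h3
  -- the splitting lemma
  have hSPLIT : ∀ (u : ℕ → X) (σ : ℝ), (∃ R : ℝ, ∀ n, ‖u n‖ ≤ R) → 0 < σ → σ ≤ K₀ →
      Tendsto (fun n => E (u n)) atTop (𝓝 (lam * σ)) →
      Tendsto (fun n => ‖C (u n)‖) atTop (𝓝 σ) →
      ∃ φ : ℕ → ℕ, StrictMono φ ∧ ∃ g : ℕ → G, ∃ ub : X,
        (C ub ≠ 0 ∧ ‖C ub‖ ≤ K₀ ∧ E ub = lam * ‖C ub‖) ∧ ‖C ub‖ ≤ σ ∧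
        (∃ R' : ℝ, ∀ k, ‖g k • u (φ k) - ub‖ ≤ R') ∧
        Tendsto (fun k => E (g k • u (φ k) - ub)) atTop (𝓝 (lam * (σ - ‖C ub‖))) ∧
        Tendsto (fun k => ‖C (g k • u (φ k) - ub)‖) atTop (𝓝 (σ - ‖C ub‖)) := by
    intro u σ hbd hσpos hσK hEu hCu
    have hCne : ∀ᶠ n in atTop, C (u n) ≠ 0 := by
      filter_upwards [hCu.eventually_const_lt hσpos] with n hn
      exact norm_pos_iff.mp hn
    have hratio : Tendsto (fun n => E (u n) / ‖C (u n)‖) atTop (𝓝 lam) := by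
      have h := hEu.div hCu hσpos.ne'
      rw [mul_div_cancel_right₀ _ hσpos.ne'] at h
      exact h
    obtain ⟨φ, hφ, g, ub, hub0, hweak⟩ := hnovan u hbd hCne hratio
    have hwweak : ∀ f : X →L[ℝ] ℝ,
        Tendsto (fun k => f (g k • u (φ k) - ub)) atTop (𝓝 0) := by
      intro f
      have h := (hweak f).sub_const (f ub)
      rw [sub_self] at h
      exact h.congr fun k => (map_sub f _ _).symm
    obtain ⟨R, hR⟩ := hbd
    have hwbd : ∀ k, ‖g k • u (φ k) - ub‖ ≤ R + ‖ub‖ := by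
      intro k
      calc ‖g k • u (φ k) - ub‖ ≤ ‖g k • u (φ k)‖ + ‖ub‖ := norm_sub_le _ _
        _ ≤ R + ‖ub‖ := by rw [hGnorm]; exact add_le_add_left (hR _) _
    have hEuφ : Tendsto (fun k => E (u (φ k))) atTop (𝓝 (lam * σ)) :=
      hEu.comp hφ.tendsto_atTop
    have hCuφ : Tendsto (fun k => ‖C (u (φ k))‖) atTop (𝓝 σ) :=
      hCu.comp hφ.tendsto_atTop
    have hEo := hEsplit ub (fun k => g k • u (φ k) - ub) hwweak
    have hCo := hCsplit ub (fun k => g k • u (φ k) - ub) hwweak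
    have hgu : ∀ k, ub + (g k • u (φ k) - ub) = g k • u (φ k) := fun k => by abel
    have hEw : Tendsto (fun k => E (g k • u (φ k) - ub)) atTop (𝓝 (lam * σ - E ub)) := by
      have h1 : Tendsto (fun k => E (ub + (g k • u (φ k) - ub)) - E ub
          - (E (ub + (g k • u (φ k) - ub)) - E ub - E (g k • u (φ k) - ub))) atTop
          (𝓝 (lam * σ - E ub - 0)) := by
        refine Tendsto.sub ?_ hEo
        have h2 : Tendsto (fun k => E (u (φ k)) - E ub) atTop (𝓝 (lam * σ - E ub)) :=
          hEuφ.sub_const _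
        refine h2.congr fun k => ?_
        rw [hgu k, hEG]
      rw [sub_zero] at h1
      exact h1.congr fun k => by ring
    have hCw : Tendsto (fun k => ‖C (g k • u (φ k) - ub)‖) atTop (𝓝 (σ - ‖C ub‖)) := by
      have h1 : Tendsto (fun k => ‖C (ub + (g k • u (φ k) - ub))‖ - ‖C ub‖
          - (‖C (ub + (g k • u (φ k) - ub))‖ - ‖C ub‖ - ‖C (g k • u (φ k) - ub)‖)) atTop
          (𝓝 (σ - ‖C ub‖ - 0)) := by
        refine Tendsto.sub ?_ hCo
        have h2 : Tendsto (fun k => ‖C (u (φ k))‖ - ‖C ub‖) atTop (𝓝 (σ - ‖C ub‖)) :=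
          hCuφ.sub_const _
        refine h2.congr fun k => ?_
        rw [hgu k, hCG]
      rw [sub_zero] at h1
      exact h1.congr fun k => by ring
    have hβ0 : 0 ≤ σ - ‖C ub‖ := ge_of_tendsto hCw (Eventually.of_forall fun k => norm_nonneg _)
    have hCubσ : ‖C ub‖ ≤ σ := by linarith
    have h1 : lam * ‖C ub‖ ≤ E ub :=
      hLB (fun _ => ub) ‖C ub‖ (E ub) (le_trans hCubσ hσK) tendsto_const_nhds tendsto_const_nhds
    have h2 : lam * (σ - ‖C ub‖) ≤ lam * σ - E ub := hLB _ _ _ (by linarith [norm_nonneg (C ub)]) hCw hEw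
    rw [mul_sub] at h2
    have hEub : E ub = lam * ‖C ub‖ := by linarith
    have hCub0 : C ub ≠ 0 := by
      intro h0
      have hnc : ‖C ub‖ = 0 := by rw [h0, norm_zero]
      have hE0' : E ub = 0 := by rw [hEub, hnc, mul_zero]
      have hten : Tendsto (fun _ : ℕ => E ub + a * ‖C ub‖ ^ s) atTop (𝓝 0) := by
        rw [hE0', hnc, Real.zero_rpow hspos.ne', mul_zero, add_zero]
        exact tendsto_const_nhds
      have h3 := hcoer₃ (fun _ => ub) hten
      exact hub0 (tendsto_nhds_unique tendsto_const_nhds h3)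
    refine ⟨φ, hφ, g, ub, ⟨hCub0, le_trans hCubσ hσK, hEub⟩, hCubσ, ⟨R + ‖ub‖, hwbd⟩, ?_, hCw⟩
    have h4 : lam * σ - E ub = lam * (σ - ‖C ub‖) := by rw [hEub]; ring
    rwa [h4] at hEw
  -- existence of a minimizer
  have hexists : ∃ ub : X, C ub ≠ 0 ∧ ‖C ub‖ ≤ K₀ ∧ E ub = lam * ‖C ub‖ := by
    have hsel : ∀ n : ℕ, ∃ v : X, C v ≠ 0 ∧ ‖C v‖ ≤ K₀ + 1/(n+1) ∧
        E v / ‖C v‖ < m (K₀ + 1/(n+1)) + 1/(n+1) := by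
      intro n
      have hpos : (0:ℝ) < 1/((n:ℝ)+1) := by positivity
      have hne := hSne (K₀ + 1/(n+1)) (by linarith)
      obtain ⟨x, hx, hxlt⟩ := exists_lt_of_csInf_lt hne (lt_add_of_pos_right _ hpos)
      obtain ⟨v, hv0, hvt, rfl⟩ := hx
      exact ⟨v, hv0, hvt, hxlt⟩
    choose v hv0 hvt hvlt using hsel
    have htmem : ∀ n : ℕ, K₀ + 1/((n:ℝ)+1) ∈ Set.Ioc K₀ (K₀ + 1) := by
      intro n
      constructor
      · have : (0:ℝ) < 1/((n:ℝ)+1) := by positivity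
        linarith
      · have h1 : 1/((n:ℝ)+1) ≤ 1 := by
          rw [div_le_one (by positivity)]
          linarith [(by positivity : (0:ℝ) ≤ (n:ℝ))]
        linarith
    have hrge : ∀ n : ℕ, m (K₀ + 1/(n+1)) ≤ E (v n) / ‖C (v n)‖ := fun n =>
      csInf_le (hSbddBelow _ (htmem n).2) ⟨v n, hv0 n, hvt n, rfl⟩
    have hmlam : ∀ n : ℕ, m (K₀ + 1/(n+1)) ≤ lam := fun n => hm_mem_le _ (htmem n)
    have hmten : Tendsto (fun n : ℕ => m (K₀ + 1/(n+1))) atTop (𝓝 lam) := by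
      rw [Metric.tendsto_atTop]
      intro ε hε
      obtain ⟨x, hx, hxgt⟩ := exists_lt_of_lt_csSup himg_ne (show lam - ε < lam by linarith)
      obtain ⟨t', ht', rfl⟩ := hx
      have h0 : (0:ℝ) < t' - K₀ := by linarith [ht'.1]
      have hev : ∀ᶠ n : ℕ in atTop, 1/((n:ℝ)+1) < t' - K₀ :=
        tendsto_one_div_add_atTop_nhds_zero_nat.eventually_lt_const h0
      obtain ⟨N, hN⟩ := eventually_atTop.mp hev
      refine ⟨N, fun n hn => ?_⟩
      have h2 : m t' ≤ m (K₀ + 1/(n+1)) :=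
        hmanti _ _ (by linarith [(htmem n).1, hσ₀K₀]) (by linarith [hN n hn]) ht'.2
      have h3 := hmlam n
      rw [Real.dist_eq, abs_lt]
      constructor <;> linarith
    have hratten : Tendsto (fun n : ℕ => E (v n) / ‖C (v n)‖) atTop (𝓝 lam) := by
      have hup : Tendsto (fun n : ℕ => m (K₀ + 1/(n+1)) + 1/(n+1)) atTop (𝓝 (lam + 0)) :=
        hmten.add tendsto_one_div_add_atTop_nhds_zero_nat
      rw [add_zero] at hup
      exact tendsto_of_tendsto_of_tendsto_of_le_of_le hmten hup
        (fun n => hrge n) (fun n => (hvlt n).le)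
    have hnormmem : ∀ n : ℕ, ‖C (v n)‖ ∈ Set.Icc (0:ℝ) (K₀ + 1) := by
      intro n
      refine ⟨norm_nonneg _, ?_⟩
      have h1 := (htmem n).2
      linarith [hvt n]
    obtain ⟨σ, hσmem, φ₀, hφ₀, hσten⟩ :=
      (isCompact_Icc (a := (0:ℝ)) (b := K₀ + 1)).tendsto_subseq hnormmem
    have hσten' : Tendsto (fun k => ‖C (v (φ₀ k))‖) atTop (𝓝 σ) := hσten
    have hratφ : Tendsto (fun k => E (v (φ₀ k)) / ‖C (v (φ₀ k))‖) atTop (𝓝 lam) :=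
      hratten.comp hφ₀.tendsto_atTop
    have hEφ : Tendsto (fun k => E (v (φ₀ k))) atTop (𝓝 (lam * σ)) := by
      have h := hratφ.mul hσten'
      exact h.congr fun k => div_mul_cancel₀ _ (norm_ne_zero_iff.mpr (hv0 _))
    have hσK : σ ≤ K₀ := by
      have hup : Tendsto (fun k : ℕ => K₀ + 1/((φ₀ k : ℝ)+1)) atTop (𝓝 (K₀ + 0)) :=
        tendsto_const_nhds.add (tendsto_one_div_add_atTop_nhds_zero_nat.comp hφ₀.tendsto_atTop)
      rw [add_zero] at hup
      exact le_of_tendsto_of_tendsto hσten' hup (Eventually.of_forall fun k => hvt (φ₀ k))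
    rcases eq_or_lt_of_le hσmem.1 with hσ0 | hσpos
    · exfalso
      have hC0' : Tendsto (fun k => ‖C (v (φ₀ k))‖) atTop (𝓝 0) := by
        rw [hσ0]; exact hσten'
      have hE0' : Tendsto (fun k => E (v (φ₀ k))) atTop (𝓝 0) := by
        have h := hEφ
        rw [← hσ0, mul_zero] at h
        exact h
      have hcs : Tendsto (fun k => E (v (φ₀ k)) + a * ‖C (v (φ₀ k))‖ ^ s) atTop (𝓝 0) := by
        have h2 : Tendsto (fun k => ‖C (v (φ₀ k))‖ ^ s) atTop (𝓝 0) := by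
          have hcont := (Real.continuousAt_rpow_const 0 s (Or.inr hspos.le)).tendsto
          have h3 := hcont.comp hC0'
          rw [Real.zero_rpow hspos.ne'] at h3
          exact h3
        have h4 := hE0'.add (h2.const_mul a)
        rw [mul_zero, add_zero] at h4
        exact h4
      have hv0' := hcoer₃ _ hcs
      exact hzero _ hv0' (Eventually.of_forall fun k => hv0 _) hratφ
    · have hbd2 : ∃ R : ℝ, ∀ k, ‖v (φ₀ k)‖ ≤ R := by
        apply hBDD (fun k => v (φ₀ k)) (lam * σ + a * σ ^ s)
        have h2 : Tendsto (fun k => ‖C (v (φ₀ k))‖ ^ s) atTop (𝓝 (σ ^ s)) :=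
          ((Real.continuousAt_rpow_const σ s (Or.inl hσpos.ne')).tendsto).comp hσten'
        exact hEφ.add (h2.const_mul a)
      obtain ⟨φ, hφ, g, ub, hubmem, _⟩ := hSPLIT (fun k => v (φ₀ k)) σ hbd2 hσpos hσK hEφ hσten'
      exact ⟨ub, hubmem⟩
  -- sigma_min
  have hNSne : ((fun vv : X => ‖C vv‖) ''
      {vv : X | C vv ≠ 0 ∧ ‖C vv‖ ≤ K₀ ∧ E vv = lam * ‖C vv‖}).Nonempty := by
    obtain ⟨ub, hub⟩ := hexists
    exact ⟨‖C ub‖, ub, hub, rfl⟩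
  have hNSbdd : BddBelow ((fun vv : X => ‖C vv‖) ''
      {vv : X | C vv ≠ 0 ∧ ‖C vv‖ ≤ K₀ ∧ E vv = lam * ‖C vv‖}) := by
    refine ⟨0, ?_⟩
    rintro x ⟨vv, _, rfl⟩
    exact norm_nonneg _
  set σmin : ℝ := sInf ((fun vv : X => ‖C vv‖) ''
      {vv : X | C vv ≠ 0 ∧ ‖C vv‖ ≤ K₀ ∧ E vv = lam * ‖C vv‖}) with hσmindef
  have hσmin0 : 0 ≤ σmin := by
    apply le_csInf hNSne
    rintro x ⟨vv, _, rfl⟩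
    exact norm_nonneg _
  have hσminpos : 0 < σmin := by
    rcases lt_or_eq_of_le hσmin0 with h | h
    · exact h
    · exfalso
      have hsel2 : ∀ j : ℕ, ∃ vv : X,
          (C vv ≠ 0 ∧ ‖C vv‖ ≤ K₀ ∧ E vv = lam * ‖C vv‖) ∧ ‖C vv‖ < 1/(j+1) := by
        intro j
        have hlt : σmin < 1/((j:ℝ)+1) := by
          rw [← h]; positivity
        obtain ⟨x, hx, hxlt⟩ := exists_lt_of_csInf_lt hNSne hlt
        obtain ⟨vv, hvv, rfl⟩ := hx
        exact ⟨vv, hvv, hxlt⟩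
      choose vv hvvMS hvvlt using hsel2
      have hCten : Tendsto (fun j => ‖C (vv j)‖) atTop (𝓝 0) :=
        squeeze_zero (fun j => norm_nonneg _) (fun j => (hvvlt j).le)
          tendsto_one_div_add_atTop_nhds_zero_nat
      have hEten : Tendsto (fun j => E (vv j)) atTop (𝓝 0) := by
        have h2 : Tendsto (fun j => lam * ‖C (vv j)‖) atTop (𝓝 (lam * 0)) :=
          hCten.const_mul lam
        rw [mul_zero] at h2
        exact h2.congr fun j => ((hvvMS j).2.2).symm
      have hcs : Tendsto (fun j => E (vv j) + a * ‖C (vv j)‖ ^ s) atTop (𝓝 0) := by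
        have h2 : Tendsto (fun j => ‖C (vv j)‖ ^ s) atTop (𝓝 0) := by
          have hcont := (Real.continuousAt_rpow_const 0 s (Or.inr hspos.le)).tendsto
          have h3 := hcont.comp hCten
          rw [Real.zero_rpow hspos.ne'] at h3
          exact h3
        have h4 := hEten.add (h2.const_mul a)
        rw [mul_zero, add_zero] at h4
        exact h4
      have hvten := hcoer₃ _ hcs
      have hrat : Tendsto (fun j => E (vv j) / ‖C (vv j)‖) atTop (𝓝 lam) := by
        refine tendsto_const_nhds.congr fun j => ?_
        rw [(hvvMS j).2.2, mul_div_cancel_right₀ _ (norm_ne_zero_iff.mpr (hvvMS j).1)]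
      exact hzero _ hvten (Eventually.of_forall fun j => (hvvMS j).1) hrat
  -- choose vstar
  have hvsel : ∃ vstar : X, (C vstar ≠ 0 ∧ ‖C vstar‖ ≤ K₀ ∧ E vstar = lam * ‖C vstar‖) ∧
      ‖C vstar‖ < 2 * σmin := by
    obtain ⟨x, hx, hxlt⟩ := exists_lt_of_csInf_lt hNSne (show σmin < 2 * σmin by linarith)
    obtain ⟨vstar, hvstar, rfl⟩ := hx
    exact ⟨vstar, hvstar, hxlt⟩
  obtain ⟨vstar, hvstarMS, hσstar_lt⟩ := hvsel
  have hσstar_ge : σmin ≤ ‖C vstar‖ := csInf_le hNSbdd ⟨vstar, hvstarMS, rfl⟩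
  have hσstarpos : 0 < ‖C vstar‖ := lt_of_lt_of_le hσminpos hσstar_ge
  have hσstarK : ‖C vstar‖ ≤ K₀ := hvstarMS.2.1
  -- the key compactness property
  have hSTAR : ∀ u : ℕ → X,
      Tendsto (fun n => E (u n)) atTop (𝓝 (lam * ‖C vstar‖)) →
      Tendsto (fun n => C (u n)) atTop (𝓝 (C vstar)) →
      ∃ φ : ℕ → ℕ, StrictMono φ ∧ ∃ g : ℕ → G, ∃ ub : X,
        (E ub = lam * ‖C vstar‖ ∧ C ub = C vstar) ∧
        Tendsto (fun k => g k • u (φ k)) atTop (𝓝 ub) := by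
    intro u hEu hCu
    have hCnorm : Tendsto (fun n => ‖C (u n)‖) atTop (𝓝 ‖C vstar‖) :=
      (continuous_norm.tendsto (C vstar)).comp hCu
    have hbd : ∃ R : ℝ, ∀ n, ‖u n‖ ≤ R := by
      apply hBDD u (lam * ‖C vstar‖ + a * ‖C vstar‖ ^ s)
      have h2 : Tendsto (fun n => ‖C (u n)‖ ^ s) atTop (𝓝 (‖C vstar‖ ^ s)) :=
        ((Real.continuousAt_rpow_const ‖C vstar‖ s (Or.inl hσstarpos.ne')).tendsto).comp hCnorm
      exact hEu.add (h2.const_mul a)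
    obtain ⟨φ, hφ, g, ub1, hub1mem, hub1σ, ⟨R', hwbd⟩, hEw, hCw⟩ :=
      hSPLIT u ‖C vstar‖ hbd hσstarpos hσstarK hEu hCnorm
    rcases eq_or_lt_of_le hub1σ with hβ0 | hβpos
    · -- no dichotomy : strong convergence
      have hw0 : Tendsto (fun k => g k • u (φ k) - ub1) atTop (𝓝 0) := by
        apply hcoer₃
        have hE0' : Tendsto (fun k => E (g k • u (φ k) - ub1)) atTop (𝓝 0) := by
          have h := hEw
          rw [hβ0, sub_self, mul_zero] at h
          exact h
        have hC0' : Tendsto (fun k => ‖C (g k • u (φ k) - ub1)‖) atTop (𝓝 0) := by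
          have h := hCw
          rw [hβ0, sub_self] at h
          exact h
        have h2 : Tendsto (fun k => ‖C (g k • u (φ k) - ub1)‖ ^ s) atTop (𝓝 0) := by
          have hcont := (Real.continuousAt_rpow_const 0 s (Or.inr hspos.le)).tendsto
          have h3 := hcont.comp hC0'
          rw [Real.zero_rpow hspos.ne'] at h3
          exact h3
        have h4 := hE0'.add (h2.const_mul a)
        rw [mul_zero, add_zero] at h4
        exact h4
      have hconv : Tendsto (fun k => g k • u (φ k)) atTop (𝓝 ub1) := by
        have h := hw0.const_add ub1
        rw [add_zero] at h
        exact h.congr fun k => by abel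
      have hCub1 : C ub1 = C vstar := by
        have h1 : Tendsto (fun k => C (g k • u (φ k))) atTop (𝓝 (C ub1)) :=
          (hCcont.tendsto ub1).comp hconv
        have h2 : Tendsto (fun k => C (g k • u (φ k))) atTop (𝓝 (C vstar)) := by
          have h3 := hCu.comp hφ.tendsto_atTop
          exact h3.congr fun k => (hCG _ _).symm
        exact tendsto_nhds_unique h1 h2
      refine ⟨φ, hφ, g, ub1, ⟨?_, hCub1⟩, hconv⟩
      rw [hub1mem.2.2, hβ0]
    · exfalso
      have hβK : ‖C vstar‖ - ‖C ub1‖ ≤ K₀ := by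
        linarith [norm_nonneg (C ub1)]
      obtain ⟨φ₂, hφ₂, g₂, ub2, hub2mem, hub2β, _, _, _⟩ :=
        hSPLIT (fun k => g k • u (φ k) - ub1) (‖C vstar‖ - ‖C ub1‖) ⟨R', hwbd⟩
          (by linarith) hβK hEw hCw
      have h1 : σmin ≤ ‖C ub1‖ := csInf_le hNSbdd ⟨ub1, hub1mem, rfl⟩
      have h2 : σmin ≤ ‖C ub2‖ := csInf_le hNSbdd ⟨ub2, hub2mem, rfl⟩
      linarith
  -- the set Γ
  have hvstarΓ : E vstar = lam * ‖C vstar‖ ∧ C vstar = C vstar := ⟨hvstarMS.2.2, rfl⟩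
  have hΓne : {x : X | E x = lam * ‖C vstar‖ ∧ C x = C vstar}.Nonempty := ⟨vstar, hvstarΓ⟩
  have hΓG : ∀ (g : G) (x : X), x ∈ {x : X | E x = lam * ‖C vstar‖ ∧ C x = C vstar} →
      g • x ∈ {x : X | E x = lam * ‖C vstar‖ ∧ C x = C vstar} := by
    intro g x hx
    exact ⟨by rw [hEG]; exact hx.1, by rw [hCG]; exact hx.2⟩
  have hdistG : ∀ (g : G) (x y : X), dist (g • x) (g • y) = dist x y := by
    intro g x y
    rw [dist_eq_norm, dist_eq_norm, ← (hGlin g).map_sub, hGnorm]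
  have hinfle : ∀ (g : G) (x : X),
      infDist (g • x) {x : X | E x = lam * ‖C vstar‖ ∧ C x = C vstar} ≤
      infDist x {x : X | E x = lam * ‖C vstar‖ ∧ C x = C vstar} := by
    intro g x
    refine le_of_forall_pos_le_add fun ε hε => ?_
    obtain ⟨y, hyΓ, hyd⟩ := (infDist_lt_iff hΓne).mp
      (show infDist x {x : X | E x = lam * ‖C vstar‖ ∧ C x = C vstar} <
        infDist x {x : X | E x = lam * ‖C vstar‖ ∧ C x = C vstar} + ε by linarith)
    calc infDist (g • x) {x : X | E x = lam * ‖C vstar‖ ∧ C x = C vstar}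
        ≤ dist (g • x) (g • y) := infDist_le_dist_of_mem (hΓG g y hyΓ)
      _ = dist x y := hdistG g x y
      _ ≤ infDist x {x : X | E x = lam * ‖C vstar‖ ∧ C x = C vstar} + ε := hyd.le
  have hinfeq : ∀ (g : G) (x : X),
      infDist (g • x) {x : X | E x = lam * ‖C vstar‖ ∧ C x = C vstar} =
      infDist x {x : X | E x = lam * ‖C vstar‖ ∧ C x = C vstar} := by
    intro g x
    refine le_antisymm (hinfle g x) ?_
    have h := hinfle g⁻¹ (g • x)
    rwa [inv_smul_smul] at h
  -- stability
  have hstable : Stable γ {x : X | E x = lam * ‖C vstar‖ ∧ C x = C vstar} := by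
    intro ε hε
    by_contra hcon
    push_neg at hcon
    have hsel : ∀ n : ℕ, ∃ x : X,
        infDist x {x : X | E x = lam * ‖C vstar‖ ∧ C x = C vstar} ≤ 1/(n+1) ∧
        ∃ t : ℝ, 0 ≤ t ∧
          ε < infDist (γ t x) {x : X | E x = lam * ‖C vstar‖ ∧ C x = C vstar} :=
      fun n => hcon (1/(n+1)) (by positivity)
    choose uu huud tt htt0 httd using hsel
    have hvsel2 : ∀ n : ℕ, ∃ vn ∈ {x : X | E x = lam * ‖C vstar‖ ∧ C x = C vstar},
        dist (uu n) vn < 2/(n+1) := by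
      intro n
      apply (infDist_lt_iff hΓne).mp
      have hlt : (1:ℝ)/((n:ℝ)+1) < 2/((n:ℝ)+1) := by
        have hp : (0:ℝ) < (n:ℝ)+1 := by positivity
        rw [div_lt_div_iff₀ hp hp]
        nlinarith
      linarith [huud n]
    choose vv hvvΓ hvvd using hvsel2
    obtain ⟨φ, hφ, g, vbar, ⟨hvbE, hvbC⟩, hconv⟩ := hSTAR vv
      (tendsto_const_nhds.congr fun n => ((hvvΓ n).1).symm)
      (tendsto_const_nhds.congr fun n => ((hvvΓ n).2).symm)
    have hdiff : Tendsto (fun k => g k • uu (φ k) - g k • vv (φ k)) atTop (𝓝 0) := by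
      rw [tendsto_zero_iff_norm_tendsto_zero]
      apply squeeze_zero (fun k => norm_nonneg _) (g := fun k => 2/((φ k : ℝ)+1))
      · intro k
        rw [← (hGlin (g k)).map_sub, hGnorm, ← dist_eq_norm]
        exact (hvvd (φ k)).le
      · have h1 : Tendsto (fun k : ℕ => 1/((φ k : ℝ)+1)) atTop (𝓝 0) :=
          tendsto_one_div_add_atTop_nhds_zero_nat.comp hφ.tendsto_atTop
        have h2 := h1.const_mul (2:ℝ)
        rw [mul_zero] at h2
        exact h2.congr fun k => by ring
    have hxconv : Tendsto (fun k => g k • uu (φ k)) atTop (𝓝 vbar) := by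
      have h := hconv.add hdiff
      rw [add_zero] at h
      exact h.congr fun k => by abel
    have hEuu : Tendsto (fun k => E (uu (φ k))) atTop (𝓝 (lam * ‖C vstar‖)) := by
      have h := (hEcont.tendsto vbar).comp hxconv
      rw [hvbE] at h
      exact h.congr fun k => hEG _ _
    have hCuu : Tendsto (fun k => C (uu (φ k))) atTop (𝓝 (C vstar)) := by
      have h := (hCcont.tendsto vbar).comp hxconv
      rw [hvbC] at h
      exact h.congr fun k => hCG _ _
    have hEy : Tendsto (fun k => E (γ (tt (φ k)) (uu (φ k)))) atTop (𝓝 (lam * ‖C vstar‖)) :=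
      hEuu.congr fun k => (hEflow _ _).symm
    have hCy : Tendsto (fun k => C (γ (tt (φ k)) (uu (φ k)))) atTop (𝓝 (C vstar)) :=
      hCuu.congr fun k => (hCflow _ _).symm
    obtain ⟨ψ, hψ, g', ybar, ⟨hybE, hybC⟩, hyconv⟩ := hSTAR _ hEy hCy
    have hd0 : Tendsto (fun j => infDist (γ (tt (φ (ψ j))) (uu (φ (ψ j))))
        {x : X | E x = lam * ‖C vstar‖ ∧ C x = C vstar}) atTop (𝓝 0) := by
      apply squeeze_zero (fun j => infDist_nonneg)
        (g := fun j => dist (g' j • γ (tt (φ (ψ j))) (uu (φ (ψ j)))) ybar)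
      · intro j
        rw [← hinfeq (g' j)]
        exact infDist_le_dist_of_mem ⟨hybE, hybC⟩
      · exact tendsto_iff_dist_tendsto_zero.mp hyconv
    obtain ⟨j, hj⟩ := (hd0.eventually_lt_const hε).exists
    exact absurd (httd (φ (ψ j))) (not_lt.mpr hj.le)
  -- G-compactness of Γ
  have hclosed : IsClosed {x : X | E x = lam * ‖C vstar‖ ∧ C x = C vstar} := by
    have h1 : {x : X | E x = lam * ‖C vstar‖ ∧ C x = C vstar}
        = E ⁻¹' {lam * ‖C vstar‖} ∩ C ⁻¹' {C vstar} := by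
      ext x
      simp [Set.mem_setOf_eq, Set.mem_preimage]
    rw [h1]
    exact (isClosed_singleton.preimage hEcont).inter (isClosed_singleton.preimage hCcont)
  have hGcs : GCompactSet (G := G) {x : X | E x = lam * ‖C vstar‖ ∧ C x = C vstar} := by
    refine ⟨hclosed, fun g x hx => hΓG g x hx, ?_⟩
    intro u hu
    obtain ⟨φ, hφ, g, ub, _, hconv⟩ := hSTAR u
      (tendsto_const_nhds.congr fun n => ((hu n).1).symm)
      (tendsto_const_nhds.congr fun n => ((hu n).2).symm)
    exact ⟨φ, hφ, g, ub, hconv⟩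
  have hinv : Invariant γ {x : X | E x = lam * ‖C vstar‖ ∧ C x = C vstar} := by
    intro x hx t
    exact ⟨by rw [hEflow]; exact hx.1, by rw [hCflow]; exact hx.2⟩
  have hlow : ∀ x : X, C x = C vstar → lam * ‖C vstar‖ ≤ E x := by
    intro x hx
    have h1 : lam * ‖C x‖ ≤ E x :=
      hLB (fun _ => x) ‖C x‖ (E x) (by rw [hx]; exact hσstarK)
        tendsto_const_nhds tendsto_const_nhds
    rwa [hx] at h1
  -- conclusion
  refine ⟨1, one_pos, fun δ hδ0 hδ1 => ⟨lam * ‖C vstar‖, C vstar, hvstarMS.1,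
    ⟨vstar, rfl, hvstarMS.2.2⟩, hlow, hΓne, hinv, hstable, hGcs, ?_⟩⟩
  intro x hx
  exact ⟨lam * ‖C vstar‖, C vstar, ⟨vstar, rfl, hvstarMS.2.2⟩, hlow,
    fun t => hinv x hx t, hinv, hstable, hGcs⟩
end

section
/- Under the hypotheses (EC-1)–(EC-4), the existence of an auxiliary seminorm, and the hylomorphy condition inf{ E(u)/|C(u)| : C(u) ≠ 0 } < Λ₀, there exists δ̄ > 0 such that for every δ ∈ (0, δ̄) the functional J_δ(u) = E(u)/|C(u)| + δ(E(u) + 2a|C(u)|^s), defined on { u : C(u) ≠ 0 }, attains its infimum, every minimizing sequence of J_δ is G-compact, and there exists c_δ ∈ ℝ^l with c_δ ≠ 0 such that the minimum e_δ = min{ E(u) : C(u) = c_δ } exists and is attained, the set Γ_δ of minimizers of E on { u : C(u) = c_δ } is G-compact, and every element of Γ_δ minimizes J_δ. -/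
set_option maxHeartbeats 1000000


open Filter Topology

lemma my_rpow_superadd {x y : ℝ} (hx : 0 ≤ x) (hy : 0 ≤ y) {s : ℝ} (hs : 1 ≤ s) :
    x ^ s + y ^ s ≤ (x + y) ^ s := by
  have h := NNReal.add_rpow_le_rpow_add x.toNNReal y.toNNReal hs
  have h2 : ((x.toNNReal ^ s + y.toNNReal ^ s : NNReal) : ℝ) ≤ (((x.toNNReal + y.toNNReal) ^ s : NNReal) : ℝ) :=
    NNReal.coe_le_coe.mpr h
  rw [NNReal.coe_add, NNReal.coe_rpow, NNReal.coe_rpow, NNReal.coe_rpow, NNReal.coe_add,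
    Real.coe_toNNReal _ hx, Real.coe_toNNReal _ hy] at h2
  exact h2

lemma real_ineq (a s δ t EE : ℝ) (ha : 0 ≤ a) (hs : 1 ≤ s) (hδ : 0 < δ) (ht : 0 < t)
    (hE : 0 ≤ EE + a * t ^ s) :
    δ * (EE + a * t ^ s) - a * (1/δ) ^ (s-1) ≤ EE / t + δ * (EE + 2*a*t^s) ∧
    a * t ^ (s-1) * (δ * t - 1) ≤ EE / t + δ * (EE + 2*a*t^s) := by
  have hts : t ^ s = t ^ (s-1) * t := by
    have h1 : s - 1 + 1 = s := by ring
    calc t ^ s = t ^ (s - 1 + 1) := by rw [h1]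
    _ = t ^ (s-1) * t := Real.rpow_add_one (ne_of_gt ht) _
  have hdiv : -(a * t ^ (s-1)) ≤ EE / t := by
    have h2 : -(a * t ^ s) ≤ EE := by linarith
    have h3 : -(a * t ^ s) / t ≤ EE / t := (div_le_div_iff_of_pos_right ht).mpr h2
    have h4 : -(a * t ^ s) / t = -(a * t ^ (s-1)) := by rw [hts]; field_simp
    linarith
  have hpow1 : 0 ≤ t ^ (s-1) := Real.rpow_nonneg ht.le _
  have hpow2 : 0 ≤ t ^ s := Real.rpow_nonneg ht.le _
  have hkey : -(a * (1/δ)^(s-1)) ≤ -(a * t^(s-1)) + δ * a * t^s := by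
    rcases le_or_gt t (1/δ) with h | h
    · have hle : t ^ (s-1) ≤ (1/δ)^(s-1) := Real.rpow_le_rpow ht.le h (by linarith)
      nlinarith [mul_le_mul_of_nonneg_left hle ha, mul_nonneg (mul_nonneg hδ.le ha) hpow2]
    · have hδt : 1 ≤ δ * t := by
        have := (div_lt_iff₀ hδ).mp h
        nlinarith
      have h0 : 0 ≤ a * (1/δ)^(s-1) := mul_nonneg ha (Real.rpow_nonneg (by positivity) _)
      have hexp : δ * a * t ^ s = (a * t^(s-1)) * (δ * t) := by rw [hts]; ring
      nlinarith [mul_nonneg ha hpow1]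
  constructor
  · have hre : EE / t + δ*(EE + 2*a*t^s) = EE/t + δ*(EE + a*t^s) + δ*a*t^s := by ring
    linarith
  · have hδE : 0 ≤ δ * (EE + a * t^s) := mul_nonneg hδ.le hE
    have hexp : a * t^(s-1) * (δ*t - 1) = -(a*t^(s-1)) + δ*a*t^s := by rw [hts]; ring
    linarith

lemma key_lemma {X G : Type*} [NormedAddCommGroup X] [NormedSpace ℝ X]
    [Group G] [MulAction G X] {l : ℕ}
    (E : X → ℝ) (C : X → EuclideanSpace ℝ (Fin l))
    (hEcont : Continuous E) (hCcont : Continuous C) (hC0 : C 0 = 0)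
    (hEG : ∀ (g : G) (u : X), E (g • u) = E u)
    (hCG : ∀ (g : G) (u : X), C (g • u) = C u)
    (a s : ℝ) (ha : 0 ≤ a) (hs : 1 ≤ s)
    (hcoer₁ : ∀ u : X, 0 ≤ E u + a * ‖C u‖ ^ s)
    (hcoer₂ : ∀ u : ℕ → X, Tendsto (fun n => ‖u n‖) atTop atTop →
      Tendsto (fun n => E (u n) + a * ‖C (u n)‖ ^ s) atTop atTop)
    (hcoer₃ : ∀ u : ℕ → X,
      Tendsto (fun n => E (u n) + a * ‖C (u n)‖ ^ s) atTop (𝓝 0) →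
      Tendsto u atTop (𝓝 0))
    (hEsplit : SplittingProperty E)
    (hCsplit : SplittingProperty (fun u => ‖C u‖))
    (p : Seminorm ℝ X)
    (haux : ∀ u : ℕ → X, (∃ R : ℝ, ∀ n, ‖u n‖ ≤ R) →
      (∃ δ' > 0, ∀ n, δ' ≤ p (u n)) →
      ∃ φ : ℕ → ℕ, StrictMono φ ∧ ∃ g : ℕ → G, ∃ ubar : X, ubar ≠ 0 ∧
        ∀ f : X →L[ℝ] ℝ,
          Tendsto (fun k => f (g k • u (φ k))) atTop (𝓝 (f ubar)))
    (δ lam r m : ℝ) (hδ : 0 < δ) (hr : 0 < r) (hmlam : m < lam)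
    (hmlb : ∀ u : X, C u ≠ 0 → m ≤ E u / ‖C u‖ + δ * (E u + 2*a*‖C u‖^s))
    (hviol : ∀ u : X, C u ≠ 0 → p u < r → lam < E u / ‖C u‖)
    (u : ℕ → X) (hCu : ∀ n, C (u n) ≠ 0)
    (hJu : Tendsto (fun n => E (u n) / ‖C (u n)‖ + δ * (E (u n) + 2*a*‖C (u n)‖^s)) atTop (𝓝 m)) :
    ∃ φ : ℕ → ℕ, StrictMono φ ∧ ∃ g : ℕ → G, ∃ ubar : X,
      C ubar ≠ 0 ∧ E ubar / ‖C ubar‖ + δ * (E ubar + 2*a*‖C ubar‖^s) = m ∧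
      Tendsto (fun k => g k • u (φ k)) atTop (𝓝 ubar) := by
  set J : X → ℝ := fun v => E v / ‖C v‖ + δ * (E v + 2*a*‖C v‖^s) with hJdef
  clear_value J
  have hss : (0:ℝ) < s := by linarith
  have hnorm : ∀ v : X, C v ≠ 0 → 0 < ‖C v‖ := fun v hv => norm_pos_iff.mpr hv
  have hzero : ∀ x : X, E x + a * ‖C x‖ ^ s = 0 → x = 0 := by
    intro x hx
    have h1 : Tendsto (fun _ : ℕ => E x + a * ‖C x‖ ^ s) atTop (𝓝 0) := by
      rw [hx]; exact tendsto_const_nhds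
    exact tendsto_nhds_unique tendsto_const_nhds (hcoer₃ (fun _ => x) h1)
  have hJlow : ∀ v : X, C v ≠ 0 →
      (δ * (E v + a * ‖C v‖ ^ s) - a * (1/δ)^(s-1) ≤ J v ∧
        a * ‖C v‖^(s-1) * (δ * ‖C v‖ - 1) ≤ J v) :=
    fun v hv => by rw [hJdef]; exact real_ineq a s δ _ (E v) ha hs hδ (hnorm v hv) (hcoer₁ v)
  have hJG : ∀ (g : G) (v : X), J (g • v) = J v := by
    intro g v; rw [hJdef]; simp only [hEG, hCG]
  -- tail with good properties
  have hJu' : Tendsto (fun n => J (u n)) atTop (𝓝 m) := by rw [hJdef]; exact hJu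
  have hev : ∀ᶠ n in atTop, J (u n) ≤ m + 1 ∧ J (u n) < lam :=
    (hJu'.eventually (eventually_le_nhds (lt_add_one m))).and
      (hJu'.eventually (eventually_lt_nhds hmlam))
  obtain ⟨N, hN⟩ := eventually_atTop.mp hev
  set v : ℕ → X := fun n => u (n + N) with hvdef
  have hvN : ∀ n, J (v n) ≤ m + 1 ∧ J (v n) < lam := fun n => hN (n + N) (Nat.le_add_left N n)
  have hCv : ∀ n, C (v n) ≠ 0 := fun n => hCu _
  have hpv : ∀ n, r ≤ p (v n) := by
    intro n; by_contra hc; push_neg at hc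
    have h1 := hviol (v n) (hCv n) hc
    have h3 : 0 ≤ a * ‖C (v n)‖ ^ s := mul_nonneg ha (Real.rpow_nonneg (norm_nonneg _) _)
    have h2 : 0 ≤ δ * (E (v n) + 2*a*‖C (v n)‖^s) := by
      apply mul_nonneg hδ.le
      have := hcoer₁ (v n); nlinarith
    have h4 := (hvN n).2
    have h5 : J (v n) = E (v n) / ‖C (v n)‖ + δ * (E (v n) + 2*a*‖C (v n)‖^s) := by rw [hJdef]
    linarith
  set B : ℝ := (m + 1 + a * (1/δ)^(s-1)) / δ with hBdef
  have hvB : ∀ n, E (v n) + a * ‖C (v n)‖ ^ s ≤ B := by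
    intro n
    have h1 := (hJlow (v n) (hCv n)).1
    have h2 := (hvN n).1
    rw [hBdef, le_div_iff₀ hδ]
    nlinarith
  have hbdd : ∃ R, ∀ n, ‖v n‖ ≤ R := by
    by_contra hc; push_neg at hc
    choose k hk using hc
    have hw : Tendsto (fun j : ℕ => ‖v (k (j:ℝ))‖) atTop atTop :=
      tendsto_atTop_mono (fun j => (hk (j:ℝ)).le) tendsto_natCast_atTop_atTop
    obtain ⟨j, hj⟩ := ((hcoer₂ (fun j : ℕ => v (k (j:ℝ))) hw).eventually_gt_atTop B).exists
    exact absurd (hvB (k (j:ℝ))) (not_le.mpr hj)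
  obtain ⟨φ₁, hφ₁, g₁, ub, hub0, hweak⟩ := haux v hbdd ⟨r, hr, hpv⟩
  set y : ℕ → X := fun k => g₁ k • v (φ₁ k) with hydef
  have hCy : ∀ k, C (y k) = C (v (φ₁ k)) := fun k => hCG _ _
  have hCy0 : ∀ k, C (y k) ≠ 0 := fun k => by rw [hCy]; exact hCv _
  have hJy_eq : ∀ k, J (y k) = J (v (φ₁ k)) := fun k => hJG _ _
  have hty : ∀ k, E (y k) + a*‖C (y k)‖^s ≤ B := by
    intro k
    rw [show E (y k) = E (v (φ₁ k)) from hEG _ _, hCy]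
    exact hvB _
  have hJy1 : ∀ k, J (y k) ≤ m + 1 := fun k => by rw [hJy_eq k]; exact (hvN (φ₁ k)).1
  have hJy : Tendsto (fun k => J (y k)) atTop (𝓝 m) := by
    have h1 : Tendsto (fun k => φ₁ k + N) atTop atTop :=
      tendsto_atTop_mono (fun k => Nat.le_add_right (φ₁ k) N) hφ₁.tendsto_atTop
    have h2 : Tendsto (fun k => J (u (φ₁ k + N))) atTop (𝓝 m) := hJu'.comp h1
    refine h2.congr (fun k => ?_)
    rw [show u (φ₁ k + N) = v (φ₁ k) from rfl]
    exact (hJy_eq k).symm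
  set t : ℕ → ℝ := fun k => ‖C (y k)‖ with htdef
  have htpos : ∀ k, 0 < t k := fun k => hnorm _ (hCy0 k)
  have hweaky : ∀ f : X →L[ℝ] ℝ, Tendsto (fun k => f (y k)) atTop (𝓝 (f ub)) := hweak
  have hwnull : ∀ κ : ℕ → ℕ, Tendsto κ atTop atTop →
      ∀ f : X →L[ℝ] ℝ, Tendsto (fun i => f (y (κ i) - ub)) atTop (𝓝 0) := by
    intro κ hκ f
    have h1 : Tendsto (fun i => f (y (κ i))) atTop (𝓝 (f ub)) := (hweaky f).comp hκ
    have h2 := h1.sub_const (f ub)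
    rw [sub_self] at h2
    exact h2.congr (fun i => by rw [map_sub])
  have hEsplit' : ∀ κ : ℕ → ℕ, Tendsto κ atTop atTop → ∀ c : ℝ,
      Tendsto (fun i => E (y (κ i))) atTop (𝓝 c) →
      Tendsto (fun i => E (y (κ i) - ub)) atTop (𝓝 (c - E ub)) := by
    intro κ hκ c hc
    have hs1 := hEsplit ub (fun i => y (κ i) - ub) (hwnull κ hκ)
    have hs2 : Tendsto (fun i => E (y (κ i)) - E ub - E (y (κ i) - ub)) atTop (𝓝 0) :=
      hs1.congr (fun i => by rw [show ub + (y (κ i) - ub) = y (κ i) by abel])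
    have h3 := (hc.sub_const (E ub)).sub hs2
    rw [sub_zero] at h3
    exact h3.congr (fun i => by ring)
  have hCsplit' : ∀ κ : ℕ → ℕ, Tendsto κ atTop atTop → ∀ c : ℝ,
      Tendsto (fun i => ‖C (y (κ i))‖) atTop (𝓝 c) →
      Tendsto (fun i => ‖C (y (κ i) - ub)‖) atTop (𝓝 (c - ‖C ub‖)) := by
    intro κ hκ c hc
    have hs1 := hCsplit ub (fun i => y (κ i) - ub) (hwnull κ hκ)
    have hs2 : Tendsto (fun i => ‖C (y (κ i))‖ - ‖C ub‖ - ‖C (y (κ i) - ub)‖) atTop (𝓝 0) :=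
      hs1.congr (fun i => by rw [show ub + (y (κ i) - ub) = y (κ i) by abel])
    have h3 := (hc.sub_const (‖C ub‖)).sub hs2
    rw [sub_zero] at h3
    exact h3.congr (fun i => by ring)
  have hrpow : ∀ (c : ℝ) (x : ℕ → ℝ), Tendsto x atTop (𝓝 c) →
      Tendsto (fun i => x i ^ s) atTop (𝓝 (c ^ s)) := by
    intro c x hx
    exact ((Real.continuousAt_rpow_const c s (Or.inr hss.le)).tendsto).comp hx
  have hJyκ : ∀ κ : ℕ → ℕ, Tendsto κ atTop atTop →
      Tendsto (fun i => J (y (κ i))) atTop (𝓝 m) := fun κ hκ => hJy.comp hκ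
  have hT : ∃ T, ∀ k, t k ≤ T := by
    rcases ha.eq_or_lt with ha0 | hap
    · -- a = 0
      by_contra hnb; push_neg at hnb
      have hE0' : ∀ k, 0 ≤ E (y k) := by
        intro k; have := hcoer₁ (y k); rw [← ha0] at this; simpa using this
      have hEB : ∀ k, E (y k) ≤ B := by
        intro k; have := hty k; rw [← ha0] at this; simpa using this
      have hidx : ∀ j : ℕ, ∃ k, j ≤ k ∧ (j:ℝ) < t k := by
        intro j
        obtain ⟨k, hk⟩ := hnb ((j:ℝ) + ∑ i ∈ Finset.range j, |t i|)
        have hsum0 : 0 ≤ ∑ i ∈ Finset.range j, |t i| :=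
          Finset.sum_nonneg (fun i _ => abs_nonneg _)
        refine ⟨k, ?_, by linarith⟩
        by_contra hkj; push_neg at hkj
        have h1 : t k ≤ ∑ i ∈ Finset.range j, |t i| :=
          (le_abs_self _).trans
            (Finset.single_le_sum (f := fun i => |t i|) (fun i _ => abs_nonneg _)
              (Finset.mem_range.mpr hkj))
        have h2 : (0:ℝ) ≤ j := Nat.cast_nonneg j
        linarith
      choose kk hk1 hk2 using hidx
      obtain ⟨e, -, ψ, hψ, he⟩ := (isCompact_Icc (a := (0:ℝ)) (b := B)).tendsto_subseq
        (x := fun j => E (y (kk j))) (fun j => ⟨hE0' _, hEB _⟩)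
      set κ : ℕ → ℕ := fun i => kk (ψ i) with hκdef
      have hκ : Tendsto κ atTop atTop :=
        tendsto_atTop_mono (fun i => (hψ.le_apply).trans (hk1 (ψ i))) tendsto_id
      have htκ : Tendsto (fun i => t (κ i)) atTop atTop := by
        apply tendsto_atTop_mono (fun i => (hk2 (ψ i)).le)
        exact tendsto_natCast_atTop_atTop.comp hψ.tendsto_atTop
      have hEκ : Tendsto (fun i => E (y (κ i))) atTop (𝓝 e) := he
      have hJκ := hJyκ κ hκ
      have hdiv : Tendsto (fun i => E (y (κ i)) / t (κ i)) atTop (𝓝 0) := hEκ.div_atTop htκ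
      have hJeq : ∀ i, J (y (κ i)) = E (y (κ i)) / t (κ i) + δ * E (y (κ i)) := by
        intro i; rw [hJdef, ← ha0]; simp only [htdef]; ring
      have hJκ2 : Tendsto (fun i => J (y (κ i))) atTop (𝓝 (0 + δ * e)) :=
        ((hdiv.add (hEκ.const_mul δ)).congr (fun i => (hJeq i).symm))
      have hm_eq : m = δ * e := by
        have := tendsto_nhds_unique hJκ hJκ2; linarith
      -- splitting
      have hwn := hwnull κ hκ
      have hd := hCsplit ub (fun i => y (κ i) - ub) hwn
      have hCw : Tendsto (fun i => ‖C (y (κ i) - ub)‖) atTop atTop := by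
        have hd1 : ∀ᶠ i in atTop,
            ‖C (ub + (y (κ i) - ub))‖ - ‖C ub‖ - ‖C (y (κ i) - ub)‖ ≤ 1 :=
          hd.eventually (eventually_le_nhds one_pos)
        have h2 : Tendsto (fun i => t (κ i) - (‖C ub‖ + 1)) atTop atTop :=
          tendsto_atTop_add_const_right atTop _ htκ
        apply tendsto_atTop_mono' atTop ?_ h2
        filter_upwards [hd1] with i hi
        have heq : ub + (y (κ i) - ub) = y (κ i) := by abel
        rw [heq] at hi
        have : t (κ i) = ‖C (y (κ i))‖ := rfl
        linarith
      have hEw : Tendsto (fun i => E (y (κ i) - ub)) atTop (𝓝 (e - E ub)) :=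
        hEsplit' κ hκ e hEκ
      have hCw0 : ∀ᶠ i in atTop, C (y (κ i) - ub) ≠ 0 :=
        (hCw.eventually_gt_atTop 0).mono (fun i hi => by
          intro hcc; rw [hcc] at hi; simp at hi)
      have hmw : ∀ᶠ i in atTop, m ≤ J (y (κ i) - ub) :=
        hCw0.mono (fun i hi => by simp only [hJdef]; exact hmlb _ hi)
      have hJw : Tendsto (fun i => J (y (κ i) - ub)) atTop (𝓝 (0 + δ * (e - E ub))) := by
        have h1 : Tendsto (fun i => E (y (κ i) - ub) / ‖C (y (κ i) - ub)‖) atTop (𝓝 0) :=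
          hEw.div_atTop hCw
        refine (h1.add (hEw.const_mul δ)).congr (fun i => ?_)
        rw [hJdef, ← ha0]; ring
      have hmle : m ≤ 0 + δ * (e - E ub) := ge_of_tendsto hJw hmw
      have hEub0 : 0 ≤ E ub := by
        have := hcoer₁ ub; rw [← ha0] at this; simpa using this
      have hEub : E ub = 0 := by nlinarith
      refine hub0 (hzero ub ?_)
      rw [hEub, ← ha0]; simp
    · -- 0 < a
      refine ⟨max (max 1 (2/δ)) (2*(m+1)/(a*δ)), fun k => ?_⟩
      by_contra hck; push_neg at hck
      have h1 : (1:ℝ) ≤ t k :=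
        ((le_max_left 1 (2/δ)).trans (le_max_left _ _)).trans hck.le
      have h2 : 2/δ ≤ t k :=
        ((le_max_right 1 (2/δ)).trans (le_max_left _ _)).trans hck.le
      have h3 : 2*(m+1)/(a*δ) < t k := (le_max_right _ _).trans_lt hck
      have hpow : 1 ≤ t k ^ (s-1) := by
        calc (1:ℝ) = t k ^ (0:ℝ) := (Real.rpow_zero _).symm
        _ ≤ t k ^ (s-1) := Real.rpow_le_rpow_of_exponent_le h1 (by linarith)
      have hδt : 2 ≤ δ * t k := by
        rw [div_le_iff₀ hδ] at h2; linarith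
      have hineq := (hJlow (y k) (hCy0 k)).2
      rw [show ‖C (y k)‖ = t k from rfl] at hineq
      have hJk := hJy1 k
      have hq : 0 ≤ (t k ^ (s-1) - 1) * (δ * t k - 1) :=
        mul_nonneg (by linarith) (by linarith)
      have h5 : a * (δ * t k / 2) ≤ a * (t k ^(s-1)) * (δ * t k - 1) := by
        nlinarith [mul_nonneg hap.le hq]
      have h6 : a * (δ * t k / 2) ≤ m + 1 := by linarith
      have h7 : t k ≤ 2*(m+1)/(a*δ) := by
        rw [le_div_iff₀ (by positivity)]; linarith
      linarith
  obtain ⟨T, hT⟩ := hT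
  obtain ⟨τ, hτmem, φ₂, hφ₂, hτ⟩ := isCompact_Icc.tendsto_subseq
    (x := t) (fun k => Set.mem_Icc.mpr ⟨norm_nonneg _, hT k⟩)
  have hEyb : ∀ k, E (y k) ∈ Set.Icc (-(a*T^s)) B := by
    intro k
    constructor
    · have h1 := hcoer₁ (y k)
      have h2 : ‖C (y k)‖ ^ s ≤ T ^ s :=
        Real.rpow_le_rpow (norm_nonneg _) (hT k) hss.le
      have h3 : a * ‖C (y k)‖ ^ s ≤ a * T ^ s := mul_le_mul_of_nonneg_left h2 ha
      linarith
    · have h1 := hty k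
      have h2 : 0 ≤ a * ‖C (y k)‖ ^ s :=
        mul_nonneg ha (Real.rpow_nonneg (norm_nonneg _) _)
      linarith
  obtain ⟨e, -, φ₃, hφ₃, he⟩ := isCompact_Icc.tendsto_subseq
    (x := fun i => E (y (φ₂ i))) (fun i => hEyb _)
  set κ : ℕ → ℕ := fun i => φ₂ (φ₃ i) with hκdef
  have hκat : Tendsto κ atTop atTop := (hφ₂.comp hφ₃).tendsto_atTop
  have htz : Tendsto (fun i => t (κ i)) atTop (𝓝 τ) := hτ.comp hφ₃.tendsto_atTop
  have hEz : Tendsto (fun i => E (y (κ i))) atTop (𝓝 e) := he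
  have hJz : Tendsto (fun i => J (y (κ i))) atTop (𝓝 m) := hJyκ κ hκat
  have hτ0 : 0 ≤ τ := hτmem.1
  have hτs : Tendsto (fun i => t (κ i) ^ s) atTop (𝓝 (τ ^ s)) := hrpow τ _ htz
  rcases hτ0.eq_or_lt with hτeq | hτpos
  · -- τ = 0 : contradiction
    exfalso
    have hτs0 : τ ^ s = 0 := by rw [← hτeq]; exact Real.zero_rpow (by linarith)
    have hsum : Tendsto (fun i => E (y (κ i)) + a * t (κ i) ^ s) atTop (𝓝 (e + a * τ ^ s)) :=
      hEz.add (hτs.const_mul a)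
    have he0 : 0 ≤ e := by
      have h2 : 0 ≤ e + a * τ ^ s :=
        ge_of_tendsto hsum (Eventually.of_forall fun i => hcoer₁ (y (κ i)))
      rw [hτs0] at h2; linarith
    rcases he0.eq_or_lt with he0' | hepos
    · have hlim0 : e + a * τ ^ s = 0 := by rw [hτs0, ← he0']; ring
      rw [hlim0] at hsum
      have hz0 : Tendsto (fun i => y (κ i)) atTop (𝓝 0) := hcoer₃ _ hsum
      obtain ⟨f₀, -, hf₀⟩ := exists_dual_vector ℝ ub (norm_ne_zero_iff.mpr hub0)
      have h1 : Tendsto (fun i => f₀ (y (κ i))) atTop (𝓝 (f₀ ub)) := (hweaky f₀).comp hκat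
      have h2 : Tendsto (fun i => f₀ (y (κ i))) atTop (𝓝 (f₀ 0)) :=
        (f₀.continuous.tendsto 0).comp hz0
      rw [map_zero] at h2
      have h4 : f₀ ub = 0 := tendsto_nhds_unique h1 h2
      rw [hf₀] at h4
      exact hub0 (norm_eq_zero.mp h4)
    · have hEev : ∀ᶠ i in atTop, e/2 ≤ E (y (κ i)) :=
        hEz.eventually (eventually_ge_nhds (by linarith))
      have htz0 : Tendsto (fun i => t (κ i)) atTop (𝓝 0) := by rw [hτeq]; exact htz
      have htIoi : Tendsto (fun i => t (κ i)) atTop (𝓝[>] 0) :=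
        tendsto_nhdsWithin_of_tendsto_nhds_of_eventually_within _
          htz0 (Eventually.of_forall fun i => htpos _)
      have hinv : Tendsto (fun i => (t (κ i))⁻¹) atTop atTop :=
        tendsto_inv_nhdsGT_zero.comp htIoi
      have hbig : Tendsto (fun i => e/2 * (t (κ i))⁻¹) atTop atTop :=
        hinv.const_mul_atTop (by linarith)
      have hmono : ∀ᶠ i in atTop, e/2 * (t (κ i))⁻¹ ≤ J (y (κ i)) := by
        filter_upwards [hEev] with i hi
        have h1 : e/2 * (t (κ i))⁻¹ ≤ E (y (κ i)) / t (κ i) := by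
          rw [div_eq_mul_inv]
          exact mul_le_mul_of_nonneg_right hi (inv_nonneg.mpr (htpos _).le)
        have h3 : 0 ≤ a * ‖C (y (κ i))‖ ^ s :=
          mul_nonneg ha (Real.rpow_nonneg (norm_nonneg _) _)
        have h2 : 0 ≤ δ * (E (y (κ i)) + 2*a*‖C (y (κ i))‖^s) := by
          apply mul_nonneg hδ.le
          have := hcoer₁ (y (κ i)); nlinarith
        have h4 : J (y (κ i)) = E (y (κ i)) / t (κ i) + δ * (E (y (κ i)) + 2*a*‖C (y (κ i))‖^s) := by
          rw [hJdef]
        linarith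
      exact not_tendsto_atTop_of_tendsto_nhds hJz (tendsto_atTop_mono' atTop hmono hbig)
  · -- 0 < τ : main case
    have hEw : Tendsto (fun i => E (y (κ i) - ub)) atTop (𝓝 (e - E ub)) :=
      hEsplit' κ hκat e hEz
    have hCwlim : Tendsto (fun i => ‖C (y (κ i) - ub)‖) atTop (𝓝 (τ - ‖C ub‖)) :=
      hCsplit' κ hκat τ htz
    have hc₂ : 0 ≤ τ - ‖C ub‖ :=
      ge_of_tendsto hCwlim (Eventually.of_forall fun i => norm_nonneg _)
    have hc₁ : 0 ≤ ‖C ub‖ := norm_nonneg _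
    have hsumw : Tendsto (fun i => E (y (κ i) - ub) + a * ‖C (y (κ i) - ub)‖ ^ s) atTop
        (𝓝 ((e - E ub) + a * (τ - ‖C ub‖) ^ s)) :=
      hEw.add ((hrpow _ _ hCwlim).const_mul a)
    have hμ0 : 0 ≤ (e - E ub) + a * (τ - ‖C ub‖) ^ s :=
      ge_of_tendsto hsumw (Eventually.of_forall fun i => hcoer₁ _)
    have hν0 : 0 ≤ E ub + a * ‖C ub‖ ^ s := hcoer₁ ub
    have hνpos : 0 < E ub + a * ‖C ub‖ ^ s :=
      lt_of_le_of_ne hν0 (Ne.symm fun h => hub0 (hzero ub h))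
    have hJlim : Tendsto (fun i => J (y (κ i))) atTop
        (𝓝 (e / τ + δ * (e + 2*a*τ^s))) := by
      have h1 := (hEz.div htz hτpos.ne').add
        ((hEz.add (hτs.const_mul (2*a))).const_mul δ)
      exact h1.congr (fun i => by simp only [hJdef, htdef, Pi.div_apply])
    have hm_eq : m = e / τ + δ * (e + 2*a*τ^s) := tendsto_nhds_unique hJz hJlim
    have hμ : (e - E ub) + a * (τ - ‖C ub‖)^s = 0 := by
      by_contra hμne
      have hμpos : 0 < (e - E ub) + a * (τ - ‖C ub‖)^s := lt_of_le_of_ne hμ0 (Ne.symm hμne)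
      rcases hc₂.eq_or_lt with hc₂0 | hc₂pos
      · -- τ = ‖C ub‖
        have hc₁pos : 0 < ‖C ub‖ := by linarith
        have hCub : C ub ≠ 0 := norm_pos_iff.mp hc₁pos
        have hJub := hmlb ub hCub
        have hzs : (τ - ‖C ub‖) ^ s = 0 := by
          rw [← hc₂0]; exact Real.zero_rpow (by linarith)
        rw [hzs, mul_zero, add_zero] at hμpos
        have hτc : τ = ‖C ub‖ := by linarith
        rw [hτc] at hm_eq
        have hsplitdiv : e/‖C ub‖ = E ub/‖C ub‖ + (e - E ub)/‖C ub‖ := by field_simp; ring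
        have hpos2 : 0 < (e - E ub)/‖C ub‖ := div_pos hμpos hc₁pos
        have hpos3 : 0 < δ * (e - E ub) := mul_pos hδ hμpos
        have hring : δ*(e + 2*a*‖C ub‖^s) = δ*(E ub + 2*a*‖C ub‖^s) + δ*(e - E ub) := by ring
        linarith
      · -- 0 < τ - ‖C ub‖
        have hCw0 : ∀ᶠ i in atTop, C (y (κ i) - ub) ≠ 0 :=
          (hCwlim.eventually (eventually_gt_nhds hc₂pos)).mono
            (fun i hi => norm_pos_iff.mp hi)
        have hJwlim : Tendsto (fun i => J (y (κ i) - ub)) atTop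
            (𝓝 ((e - E ub)/(τ - ‖C ub‖) + δ*((e - E ub) + 2*a*(τ - ‖C ub‖)^s))) := by
          have h1 := (hEw.div hCwlim hc₂pos.ne').add
            ((hEw.add ((hrpow _ _ hCwlim).const_mul (2*a))).const_mul δ)
          exact h1.congr (fun i => by simp only [hJdef, Pi.div_apply])
        have hmJ₂ : m ≤ (e - E ub)/(τ - ‖C ub‖) + δ*((e - E ub) + 2*a*(τ - ‖C ub‖)^s) :=
          ge_of_tendsto hJwlim (hCw0.mono (fun i hi => by simp only [hJdef]; exact hmlb _ hi))
        rcases hc₁.eq_or_lt with hc₁0 | hc₁pos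
        · -- ‖C ub‖ = 0
          have hzs : ‖C ub‖ ^ s = 0 := by
            rw [← hc₁0]; exact Real.zero_rpow (by linarith)
          rw [hzs, mul_zero, add_zero] at hνpos
          have hmJ₂' : m ≤ (e - E ub)/τ + δ*((e - E ub) + 2*a*τ^s) := by
            rw [← hc₁0] at hmJ₂; simpa using hmJ₂
          have hsplitdiv : e/τ = E ub/τ + (e - E ub)/τ := by field_simp; ring
          have hpos2 : 0 < E ub/τ := div_pos hνpos hτpos
          have hpos3 : 0 < δ * E ub := mul_pos hδ hνpos
          have hring : δ*(e + 2*a*τ^s) = δ*((e - E ub) + 2*a*τ^s) + δ*E ub := by ring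
          linarith
        · -- both positive
          have hCub : C ub ≠ 0 := norm_pos_iff.mp hc₁pos
          have hJub := hmlb ub hCub
          have hsup : ‖C ub‖^s + (τ - ‖C ub‖)^s ≤ (‖C ub‖ + (τ - ‖C ub‖))^s :=
            my_rpow_superadd hc₁ hc₂ hs
          rw [show ‖C ub‖ + (τ - ‖C ub‖) = τ by ring] at hsup
          have hδsup : δ*(2*a*(‖C ub‖^s + (τ - ‖C ub‖)^s)) ≤ δ*(2*a*τ^s) :=
            mul_le_mul_of_nonneg_left
              (mul_le_mul_of_nonneg_left hsup (by linarith : (0:ℝ) ≤ 2*a)) hδ.le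
          have hkey : δ*(E ub + 2*a*‖C ub‖^s) + δ*((e - E ub) + 2*a*(τ - ‖C ub‖)^s)
              ≤ δ*(e + 2*a*τ^s) := by nlinarith [hδsup]
          rcases le_or_gt ((E ub)*(τ - ‖C ub‖)) ((e - E ub)*‖C ub‖) with hmed | hmed
          · have hdivge : E ub/‖C ub‖ ≤ e/τ := by
              rw [div_le_div_iff₀ hc₁pos hτpos]; nlinarith
            have hD2 : δ*((e - E ub) + 2*a*(τ-‖C ub‖)^s)
                = δ*((e - E ub) + a*(τ-‖C ub‖)^s) + δ*(a*(τ-‖C ub‖)^s) := by ring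
            have hfinal : 0 < δ * ((e - E ub) + a*(τ - ‖C ub‖)^s) := mul_pos hδ hμpos
            have hnn : 0 ≤ δ * (a*(τ - ‖C ub‖)^s) :=
              mul_nonneg hδ.le (mul_nonneg ha (Real.rpow_nonneg hc₂ _))
            linarith
          · have hdivge : (e - E ub)/(τ - ‖C ub‖) ≤ e/τ := by
              rw [div_le_div_iff₀ hc₂pos hτpos]; nlinarith
            have hD1 : δ*(E ub + 2*a*‖C ub‖^s)
                = δ*(E ub + a*‖C ub‖^s) + δ*(a*‖C ub‖^s) := by ring
            have hfinal : 0 < δ * (E ub + a*‖C ub‖^s) := mul_pos hδ hνpos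
            have hnn : 0 ≤ δ * (a*‖C ub‖^s) :=
              mul_nonneg hδ.le (mul_nonneg ha (Real.rpow_nonneg hc₁ _))
            linarith
    rw [hμ] at hsumw
    have hw0 : Tendsto (fun i => y (κ i) - ub) atTop (𝓝 0) := hcoer₃ _ hsumw
    have hzub : Tendsto (fun i => y (κ i)) atTop (𝓝 ub) := by
      have h1 : Tendsto (fun i => ub + (y (κ i) - ub)) atTop (𝓝 (ub + 0)) :=
        tendsto_const_nhds.add hw0
      rw [add_zero] at h1
      exact h1.congr (fun i => by abel)
    have hCw00 : Tendsto (fun i => ‖C (y (κ i) - ub)‖) atTop (𝓝 0) := by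
      have h1 : Tendsto (fun i => C (y (κ i) - ub)) atTop (𝓝 (C 0)) :=
        (hCcont.tendsto 0).comp hw0
      rw [hC0] at h1
      have h2 : Tendsto (fun i => ‖C (y (κ i) - ub)‖) atTop (𝓝 (‖(0 : EuclideanSpace ℝ (Fin l))‖)) :=
        (continuous_norm.tendsto _).comp h1
      rwa [norm_zero] at h2
    have hc₂eq : τ - ‖C ub‖ = 0 := tendsto_nhds_unique hCwlim hCw00
    have hc₁pos : 0 < ‖C ub‖ := by linarith
    have hCub : C ub ≠ 0 := norm_pos_iff.mp hc₁pos
    have hEub : Tendsto (fun i => E (y (κ i))) atTop (𝓝 (E ub)) := (hEcont.tendsto ub).comp hzub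
    have hCubt : Tendsto (fun i => ‖C (y (κ i))‖) atTop (𝓝 ‖C ub‖) :=
      ((continuous_norm.comp hCcont).tendsto ub).comp hzub
    have hJub2 : Tendsto (fun i => J (y (κ i))) atTop
        (𝓝 (E ub/‖C ub‖ + δ*(E ub + 2*a*‖C ub‖^s))) := by
      have h1 := (hEub.div hCubt hc₁pos.ne').add
        ((hEub.add ((hrpow _ _ hCubt).const_mul (2*a))).const_mul δ)
      exact h1.congr (fun i => by simp only [hJdef, Pi.div_apply])
    have hfin : E ub/‖C ub‖ + δ*(E ub + 2*a*‖C ub‖^s) = m := tendsto_nhds_unique hJub2 hJz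
    exact ⟨fun i => φ₁ (κ i) + N, (hφ₁.comp (hφ₂.comp hφ₃)).add_const N,
      fun i => g₁ (κ i), ub, hCub, hfin, hzub⟩


/-- Theorem `furbo`: Under (EC-1)–(EC-4), the existence of an auxiliary
seminorm and the hylomorphy condition `inf E/|C| < Λ₀`, there is `δ̄ > 0` such that for
all `δ ∈ (0, δ̄)` the functional `J_δ u = E u / |C u| + δ (E u + 2 a |C u|^s)` attains
its infimum `m` on `{u | C u ≠ 0}`, every minimizing sequence of `J_δ` is `G`-compact,
and there is a charge value `c_δ ≠ 0` such that `e_δ = min {E u | C u = c_δ}` exists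
and is attained, the set `Γ_δ` of minimizers of `E` on `{u | C u = c_δ}` is
`G`-compact, and every element of `Γ_δ` minimizes `J_δ`. -/
theorem existence_of_constrained_minimizers {X G : Type*}
    [NormedAddCommGroup X] [NormedSpace ℝ X] [CompleteSpace X]
    [Group G] [MulAction G X] {l : ℕ}
    -- G is a group of linear isometries of X
    (hGlin : ∀ g : G, IsLinearMap ℝ (fun x : X => g • x))
    (hGnorm : ∀ (g : G) (x : X), ‖g • x‖ = ‖x‖)
    -- the functionals E and C
    (E : X → ℝ) (C : X → EuclideanSpace ℝ (Fin l)) (hl : 1 ≤ l)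
    (hEcont : Continuous E) (hCcont : Continuous C)
    -- (EC-1)
    (hE0 : E 0 = 0) (hC0 : C 0 = 0)
    -- (EC-2)
    (hEG : ∀ (g : G) (u : X), E (g • u) = E u)
    (hCG : ∀ (g : G) (u : X), C (g • u) = C u)
    -- (EC-3): coercivity
    (a s : ℝ) (ha : 0 ≤ a) (hs : 1 ≤ s)
    (hcoer₁ : ∀ u : X, 0 ≤ E u + a * ‖C u‖ ^ s)
    (hcoer₂ : ∀ u : ℕ → X, Tendsto (fun n => ‖u n‖) atTop atTop →
      Tendsto (fun n => E (u n) + a * ‖C (u n)‖ ^ s) atTop atTop)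
    (hcoer₃ : ∀ u : ℕ → X,
      Tendsto (fun n => E (u n) + a * ‖C (u n)‖ ^ s) atTop (𝓝 0) →
      Tendsto u atTop (𝓝 0))
    -- (EC-4): splitting property
    (hEsplit : SplittingProperty E)
    (hCsplit : SplittingProperty (fun u => ‖C u‖))
    -- the auxiliary seminorm
    (p : Seminorm ℝ X)
    (haux : ∀ u : ℕ → X, (∃ R : ℝ, ∀ n, ‖u n‖ ≤ R) →
      (∃ δ' > 0, ∀ n, δ' ≤ p (u n)) →
      ∃ φ : ℕ → ℕ, StrictMono φ ∧ ∃ g : ℕ → G, ∃ ubar : X, ubar ≠ 0 ∧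
        ∀ f : X →L[ℝ] ℝ,
          Tendsto (fun k => f (g k • u (φ k))) atTop (𝓝 (f ubar)))
    -- Λ₀ and the hylomorphy condition
    (Λ₀ : EReal)
    (hΛ₀ : Λ₀ = ⨆ (r : ℝ) (_ : 0 < r),
      ⨅ u : {u : X // C u ≠ 0 ∧ p u < r}, ((E u.1 / ‖C u.1‖ : ℝ) : EReal))
    (hhylo : (⨅ u : {u : X // C u ≠ 0}, ((E u.1 / ‖C u.1‖ : ℝ) : EReal)) < Λ₀) :
    ∃ δbar : ℝ, 0 < δbar ∧ ∀ δ : ℝ, 0 < δ → δ < δbar →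
      ∃ m : ℝ,
        -- J_δ attains its infimum m on {u | C u ≠ 0}
        (∃ u : X, C u ≠ 0 ∧
          E u / ‖C u‖ + δ * (E u + 2 * a * ‖C u‖ ^ s) = m) ∧
        (∀ u : X, C u ≠ 0 →
          m ≤ E u / ‖C u‖ + δ * (E u + 2 * a * ‖C u‖ ^ s)) ∧
        -- every minimizing sequence of J_δ is G-compact
        (∀ u : ℕ → X, (∀ n, C (u n) ≠ 0) →
          Tendsto (fun n => E (u n) / ‖C (u n)‖ +
            δ * (E (u n) + 2 * a * ‖C (u n)‖ ^ s)) atTop (𝓝 m) →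
          GCompactSeq (G := G) u) ∧
        -- the constrained minimum e_δ at charge c_δ ≠ 0 exists and is attained,
        -- and the set Γ_δ of its minimizers is G-compact
        ∃ (eδ : ℝ) (cδ : EuclideanSpace ℝ (Fin l)), cδ ≠ 0 ∧
          (∃ u : X, C u = cδ ∧ E u = eδ) ∧
          (∀ u : X, C u = cδ → eδ ≤ E u) ∧
          GCompactSet (G := G) {u : X | C u = cδ ∧ E u = eδ} ∧
          -- every element of Γ_δ minimizes J_δ
          (∀ u : X, C u = cδ → E u = eδ →
            E u / ‖C u‖ + δ * (E u + 2 * a * ‖C u‖ ^ s) = m) := by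
  obtain ⟨⟨u₀, hCu₀⟩, hu₀lt⟩ := iInf_lt_iff.mp hhylo
  obtain ⟨lam, hlam1, hlam2⟩ := EReal.exists_between_coe_real hu₀lt
  have hq₀lam : E u₀ / ‖C u₀‖ < lam := by exact_mod_cast hlam1
  rw [hΛ₀, lt_iSup_iff] at hlam2
  obtain ⟨r, hlam2⟩ := hlam2
  rw [lt_iSup_iff] at hlam2
  obtain ⟨hr0, hlam3⟩ := hlam2
  have hviol : ∀ u : X, C u ≠ 0 → p u < r → lam < E u / ‖C u‖ := by
    intro u hu hpu
    have h1 : (lam : EReal) < ((E u / ‖C u‖ : ℝ) : EReal) :=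
      hlam3.trans_le (iInf_le (fun u : {u : X // C u ≠ 0 ∧ p u < r} => ((E u.1 / ‖C u.1‖ : ℝ) : EReal)) ⟨u, hu, hpu⟩)
    exact_mod_cast h1
  have hnormpos : ∀ u : X, C u ≠ 0 → 0 < ‖C u‖ := fun u h => norm_pos_iff.mpr h
  have hK₀ : 0 ≤ E u₀ + 2*a*‖C u₀‖^s := by
    have h1 := hcoer₁ u₀
    have h2 : 0 ≤ a * ‖C u₀‖ ^ s := mul_nonneg ha (Real.rpow_nonneg (norm_nonneg _) _)
    linarith
  refine ⟨(lam - E u₀ / ‖C u₀‖) / (E u₀ + 2*a*‖C u₀‖^s + 1),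
    div_pos (by linarith) (by linarith), ?_⟩
  intro δ hδ0 hδbar
  set S : Set ℝ := {x | ∃ u : X, C u ≠ 0 ∧ E u / ‖C u‖ + δ * (E u + 2 * a * ‖C u‖ ^ s) = x}
    with hSdef
  have hSne : S.Nonempty := ⟨_, u₀, hCu₀, rfl⟩
  have hSbd : BddBelow S := by
    refine ⟨-(a*(1/δ)^(s-1)), fun x hx => ?_⟩
    obtain ⟨u, hu, rfl⟩ := hx
    have h1 := (real_ineq a s δ _ (E u) ha hs hδ0 (hnormpos u hu) (hcoer₁ u)).1
    have h2 : 0 ≤ δ * (E u + a * ‖C u‖ ^ s) := mul_nonneg hδ0.le (hcoer₁ u)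
    linarith
  set m := sInf S with hmdef
  have hmlb : ∀ u : X, C u ≠ 0 → m ≤ E u / ‖C u‖ + δ * (E u + 2 * a * ‖C u‖ ^ s) :=
    fun u hu => csInf_le hSbd ⟨u, hu, rfl⟩
  have hJu₀lam : E u₀ / ‖C u₀‖ + δ * (E u₀ + 2*a*‖C u₀‖^s) < lam := by
    have h1 : δ * (E u₀ + 2*a*‖C u₀‖^s + 1) < lam - E u₀ / ‖C u₀‖ :=
      (lt_div_iff₀ (by linarith)).mp hδbar
    have h2 : δ * (E u₀ + 2*a*‖C u₀‖^s) ≤ δ * (E u₀ + 2*a*‖C u₀‖^s + 1) :=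
      mul_le_mul_of_nonneg_left (by linarith) hδ0.le
    linarith
  have hmlam : m < lam := lt_of_le_of_lt (hmlb u₀ hCu₀) hJu₀lam
  have hminex : ∀ n : ℕ, ∃ u : X, C u ≠ 0 ∧
      E u / ‖C u‖ + δ * (E u + 2 * a * ‖C u‖ ^ s) < m + 1/((n:ℝ)+1) := by
    intro n
    have hlt : sInf S < m + 1/((n:ℝ)+1) := by
      have h0 : (0:ℝ) < 1/((n:ℝ)+1) := by positivity
      rw [← hmdef]; linarith
    obtain ⟨x, hxS, hxlt⟩ := exists_lt_of_csInf_lt hSne hlt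
    obtain ⟨u, hu, rfl⟩ := hxS
    exact ⟨u, hu, hxlt⟩
  choose useq hCseq hJseq using hminex
  have hJmin : Tendsto (fun n => E (useq n) / ‖C (useq n)‖ +
      δ * (E (useq n) + 2 * a * ‖C (useq n)‖ ^ s)) atTop (𝓝 m) := by
    have hupper : Tendsto (fun n : ℕ => m + 1/((n:ℝ)+1)) atTop (𝓝 (m + 0)) :=
      tendsto_const_nhds.add tendsto_one_div_add_atTop_nhds_zero_nat
    rw [add_zero] at hupper
    exact tendsto_of_tendsto_of_tendsto_of_le_of_le tendsto_const_nhds hupper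
      (fun n => hmlb _ (hCseq n)) (fun n => (hJseq n).le)
  have hkey := key_lemma E C hEcont hCcont hC0 hEG hCG a s ha hs hcoer₁ hcoer₂ hcoer₃
    hEsplit hCsplit p haux δ lam r m hδ0 hr0 hmlam hmlb hviol
  obtain ⟨φ, hφ, g, uh, hCuh, hJuh, htends⟩ := hkey useq hCseq hJmin
  refine ⟨m, ⟨uh, hCuh, hJuh⟩, hmlb, ?_, E uh, C uh, hCuh, ⟨uh, rfl, rfl⟩, ?_, ⟨?_, ?_, ?_⟩, ?_⟩
  · intro u hCu hJu
    obtain ⟨φ', hφ', g', ub, -, -, ht⟩ := hkey u hCu hJu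
    exact ⟨φ', hφ', g', ub, ht⟩
  · intro u hCuc
    by_contra hcon; push_neg at hcon
    have hnc : C u ≠ 0 := by rw [hCuc]; exact hCuh
    have h1 := hmlb u hnc
    have hCeq : ‖C u‖ = ‖C uh‖ := by rw [hCuc]
    have hcpos : 0 < ‖C uh‖ := hnormpos _ hCuh
    rw [hCeq] at h1
    have h2 : E u / ‖C uh‖ < E uh / ‖C uh‖ := (div_lt_div_iff_of_pos_right hcpos).mpr hcon
    have h3 : δ * (E u + 2*a*‖C uh‖^s) < δ * (E uh + 2*a*‖C uh‖^s) :=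
      mul_lt_mul_of_pos_left (by linarith) hδ0
    linarith [hJuh]
  · have hset : {u : X | C u = C uh ∧ E u = E uh} = (C ⁻¹' {C uh}) ∩ (E ⁻¹' {E uh}) := by
      ext u; simp [Set.mem_preimage, Set.mem_inter_iff]
    rw [hset]
    exact (isClosed_singleton.preimage hCcont).inter (isClosed_singleton.preimage hEcont)
  · intro g0 u hu
    exact ⟨by rw [hCG]; exact hu.1, by rw [hEG]; exact hu.2⟩
  · intro u hu
    have hCu : ∀ n, C (u n) ≠ 0 := fun n => by rw [(hu n).1]; exact hCuh
    have hJcon : ∀ n, E (u n) / ‖C (u n)‖ + δ * (E (u n) + 2 * a * ‖C (u n)‖ ^ s) = m := by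
      intro n; rw [(hu n).2, (hu n).1]; exact hJuh
    have hmin : Tendsto (fun n => E (u n) / ‖C (u n)‖ +
        δ * (E (u n) + 2 * a * ‖C (u n)‖ ^ s)) atTop (𝓝 m) := by
      have : (fun n => E (u n) / ‖C (u n)‖ + δ * (E (u n) + 2 * a * ‖C (u n)‖ ^ s))
          = fun _ => m := funext hJcon
      rw [this]; exact tendsto_const_nhds
    obtain ⟨φ', hφ', g', ub, -, -, ht⟩ := hkey u hCu hmin
    exact ⟨φ', hφ', g', ub, ht⟩
  · intro u hCuc hEuc
    rw [hEuc, hCuc]; exact hJuh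
end

section
/- Let E : X → ℝ and C : X → ℝ^l be continuous, G-invariant integrals of motion of the dynamical system (X,γ) (i.e. E(γ_t u) = E(u) and C(γ_t u) = C(u) for all t and u). Fix e₀ ∈ ℝ and c₀ ∈ ℝ^l and set V(u) = (E(u) − e₀)² + |C(u) − c₀|². If every sequence (u_n) with V(u_n) → 0 is G-compact and the set Γ = { u ∈ X : E(u) = e₀, C(u) = c₀ } is nonempty, then Γ is invariant, stable, and G-compact; in particular every u ∈ Γ is a soliton. -/
open Filter Topology Metric

/-- Theorem `astraco`: Let `E, C` be continuous `G`-invariant integrals of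
motion of `(X, γ)`, fix `e₀, c₀`, and set `V u = (E u - e₀)² + |C u - c₀|²`.  If every
sequence `(u n)` with `V (u n) → 0` is `G`-compact and
`Γ = {u | E u = e₀ ∧ C u = c₀}` is nonempty, then `Γ` is invariant, stable and
`G`-compact; in particular every `u ∈ Γ` is a soliton. -/
theorem level_set_is_stable_invariant_GCompact {X G : Type*} [MetricSpace X]
    [Group G] [MulAction G X] {l : ℕ}
    (hiso : ∀ g : G, Isometry (fun x : X => g • x))
    (γ : ℝ → X → X)
    (hγ0 : ∀ u : X, γ 0 u = u)
    (hγadd : ∀ (t s : ℝ) (u : X), γ (t + s) u = γ t (γ s u))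
    (E : X → ℝ) (C : X → EuclideanSpace ℝ (Fin l))
    (hEcont : Continuous E) (hCcont : Continuous C)
    (hEflow : ∀ (t : ℝ) (u : X), E (γ t u) = E u)
    (hCflow : ∀ (t : ℝ) (u : X), C (γ t u) = C u)
    (hEG : ∀ (g : G) (u : X), E (g • u) = E u)
    (hCG : ∀ (g : G) (u : X), C (g • u) = C u)
    (e₀ : ℝ) (c₀ : EuclideanSpace ℝ (Fin l))
    (V : X → ℝ) (hV : ∀ u : X, V u = (E u - e₀) ^ 2 + ‖C u - c₀‖ ^ 2)
    (hGc : ∀ u : ℕ → X, Tendsto (fun n => V (u n)) atTop (𝓝 0) →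
      GCompactSeq (G := G) u)
    (Γ : Set X) (hΓ : Γ = {u : X | E u = e₀ ∧ C u = c₀}) (hΓne : Γ.Nonempty) :
    Invariant γ Γ ∧ Stable γ Γ ∧ GCompactSet (G := G) Γ ∧
      ∀ u ∈ Γ, IsSoliton (G := G) γ u := by

  have hVcont : Continuous V := by
    have : V = fun u => (E u - e₀) ^ 2 + ‖C u - c₀‖ ^ 2 := funext hV
    rw [this]; fun_prop
  have hVflow : ∀ (t : ℝ) (u : X), V (γ t u) = V u := by
    intro t u; simp [hV, hEflow, hCflow]
  have hVG : ∀ (g : G) (u : X), V (g • u) = V u := by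
    intro g u; simp [hV, hEG, hCG]
  have hVmem : ∀ u : X, u ∈ Γ ↔ V u = 0 := by
    intro u
    rw [hΓ, hV]
    constructor
    · rintro ⟨h1, h2⟩; simp [h1, sub_eq_zero_of_eq h2]
    · intro h
      have h1 : (E u - e₀) ^ 2 = 0 ∧ ‖C u - c₀‖ ^ 2 = 0 := by
        constructor <;> nlinarith [sq_nonneg (E u - e₀), sq_nonneg ‖C u - c₀‖]
      obtain ⟨h1, h2⟩ := h1
      have h1' : E u - e₀ = 0 := by nlinarith
      have h2' : ‖C u - c₀‖ = 0 := by nlinarith [norm_nonneg (C u - c₀)]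
      exact ⟨by linarith, sub_eq_zero.mp (norm_eq_zero.mp h2')⟩
  have hinv : Invariant γ Γ := by
    intro u hu t
    rw [hVmem] at hu ⊢
    rw [hVflow, hu]
  have hginv : ∀ g : G, ∀ u ∈ Γ, g • u ∈ Γ := by
    intro g u hu
    rw [hVmem] at hu ⊢
    rw [hVG, hu]
  have hclosed : IsClosed Γ := by
    have : Γ = V ⁻¹' {0} := Set.ext fun u => hVmem u
    rw [this]
    exact isClosed_singleton.preimage hVcont
  -- infDist is G-invariant
  have hinfG : ∀ (g : G) (x : X), infDist (g • x) Γ = infDist x Γ := by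
    intro g x
    have him : (fun y : X => g • y) '' Γ = Γ := by
      apply Set.Subset.antisymm
      · rintro _ ⟨y, hy, rfl⟩; exact hginv g y hy
      · intro y hy
        exact ⟨g⁻¹ • y, hginv g⁻¹ y hy, by simp⟩
    calc infDist (g • x) Γ = infDist ((fun y : X => g • y) x) ((fun y : X => g • y) '' Γ) := by
          rw [him]
      _ = infDist x Γ := infDist_image (hiso g)
  have hGset : GCompactSet (G := G) Γ := by
    refine ⟨hclosed, hginv, fun u hu => hGc u ?_⟩
    have : (fun n => V (u n)) = fun _ => (0 : ℝ) := by
      funext n; exact (hVmem (u n)).mp (hu n)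
    rw [this]; exact tendsto_const_nhds
  have hstab : Stable γ Γ := by
    by_contra hns
    unfold Stable at hns
    push_neg at hns
    obtain ⟨ε, hε, hns⟩ := hns
    -- for each n, pick a bad point
    have key : ∀ n : ℕ, ∃ u : X, infDist u Γ ≤ 1 / (n + 1) ∧
        ∃ t : ℝ, 0 ≤ t ∧ ε < infDist (γ t u) Γ := by
      intro n
      obtain ⟨u, hu1, hu2⟩ := hns (1 / (n + 1)) (by positivity)
      obtain ⟨t, ht0, ht⟩ := hu2
      exact ⟨u, hu1, t, ht0, ht⟩
    choose u hu t ht0 htbad using key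
    -- pick nearby points in Γ
    have key2 : ∀ n : ℕ, ∃ v ∈ Γ, dist (u n) v < 2 / (n + 1) := by
      intro n
      apply (infDist_lt_iff hΓne).mp
      calc infDist (u n) Γ ≤ 1 / (n + 1) := hu n
        _ < 2 / (n + 1) := by
          have hpos : (0:ℝ) < (n:ℝ) + 1 := by positivity
          rw [div_lt_div_iff₀ hpos hpos]; nlinarith
    choose v hvΓ hvd using key2
    obtain ⟨φ, hφ, g, x, hx⟩ := hGset.2.2 v hvΓ
    -- g k • u (φ k) also tends to x
    have hdist : Tendsto (fun k => dist (g k • u (φ k)) (g k • v (φ k))) atTop (𝓝 0) := by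
      have heq : ∀ k, dist (g k • u (φ k)) (g k • v (φ k)) = dist (u (φ k)) (v (φ k)) :=
        fun k => (hiso (g k)).dist_eq _ _
      simp only [heq]
      apply squeeze_zero (fun k => dist_nonneg) (fun k => le_of_lt (hvd (φ k)))
      have h1 : Tendsto (fun k : ℕ => 2 / ((k : ℝ) + 1)) atTop (𝓝 0) := by
        apply Tendsto.div_atTop tendsto_const_nhds
        exact tendsto_atTop_add_const_right _ _ tendsto_natCast_atTop_atTop
      exact h1.comp (hφ.tendsto_atTop.comp tendsto_id) |>.congr (fun k => rfl)
    have hux : Tendsto (fun k => g k • u (φ k)) atTop (𝓝 x) := by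
      apply tendsto_of_tendsto_of_dist hx
      simpa [dist_comm] using hdist
    -- V x = 0
    have hVx : V x = 0 := by
      have h1 : Tendsto (fun k => V (g k • v (φ k))) atTop (𝓝 (V x)) :=
        (hVcont.tendsto x).comp hx
      have h2 : (fun k => V (g k • v (φ k))) = fun _ => (0 : ℝ) := by
        funext k; rw [hVG]; exact (hVmem _).mp (hvΓ (φ k))
      rw [h2] at h1
      exact (tendsto_nhds_unique tendsto_const_nhds h1).symm
    -- V (u (φ k)) → 0
    have hVu : Tendsto (fun k => V (u (φ k))) atTop (𝓝 0) := by
      have h1 : Tendsto (fun k => V (g k • u (φ k))) atTop (𝓝 (V x)) :=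
        (hVcont.tendsto x).comp hux
      rw [hVx] at h1
      simpa [hVG] using h1
    -- apply hGc to the pushed-forward sequence
    set w : ℕ → X := fun k => γ (t (φ k)) (u (φ k)) with hw
    have hVw : Tendsto (fun k => V (w k)) atTop (𝓝 0) := by
      simpa [hw, hVflow] using hVu
    obtain ⟨ψ, hψ, h, y, hy⟩ := hGc w hVw
    have hVy : V y = 0 := by
      have h1 : Tendsto (fun j => V (h j • w (ψ j))) atTop (𝓝 (V y)) :=
        (hVcont.tendsto y).comp hy
      have h2 : Tendsto (fun j => V (h j • w (ψ j))) atTop (𝓝 0) := by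
        simp only [hVG]
        exact hVw.comp hψ.tendsto_atTop
      exact tendsto_nhds_unique h1 h2
    have hyΓ : y ∈ Γ := (hVmem y).mpr hVy
    have hinf0 : Tendsto (fun j => infDist (w (ψ j)) Γ) atTop (𝓝 0) := by
      have h1 : Tendsto (fun j => infDist (h j • w (ψ j)) Γ) atTop (𝓝 (infDist y Γ)) :=
        ((continuous_infDist_pt Γ).tendsto y).comp hy
      rw [infDist_zero_of_mem hyΓ] at h1
      simpa [hinfG] using h1
    -- contradiction with infDist (w k) Γ > ε
    have : ∀ᶠ j in atTop, infDist (w (ψ j)) Γ < ε :=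
      hinf0.eventually (eventually_lt_nhds hε)
    obtain ⟨j, hj⟩ := this.exists
    exact absurd (htbad (φ (ψ j))) (not_lt.mpr hj.le)
  exact ⟨hinv, hstab, hGset, fun u huΓ =>
    ⟨Γ, fun t' => hinv u huΓ t', hinv, hstab, hGset⟩⟩
end

section
/- Let (X,d) be a metric space, G a group acting on X by isometries, and V : X → ℝ a continuous, nonnegative, G-invariant function whose zero set Γ = { u ∈ X : V(u) = 0 } is nonempty. Assume that every sequence (u_n) with V(u_n) → 0 is G-compact. Then for every sequence (u_n) in X: V(u_n) → 0 if and only if d(u_n, Γ) → 0. -/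
open Filter Topology Metric

lemma exists_subseq_of_not_tendsto (f : ℕ → ℝ) (hf : ∀ n, 0 ≤ f n)
    (h : ¬ Tendsto f atTop (𝓝 0)) :
    ∃ ε > 0, ∃ φ : ℕ → ℕ, StrictMono φ ∧ ∀ n, ε ≤ f (φ n) := by
  rw [Metric.tendsto_atTop] at h
  push_neg at h
  obtain ⟨ε, hε, h⟩ := h
  refine ⟨ε, hε, ?_⟩
  have hfreq : ∃ᶠ n in atTop, ε ≤ f n := by
    rw [frequently_atTop]
    intro N
    obtain ⟨n, hn, hdn⟩ := h N
    exact ⟨n, hn, by rwa [Real.dist_eq, sub_zero, abs_of_nonneg (hf n)] at hdn⟩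
  exact Filter.extraction_of_frequently_atTop hfreq

/-- Let `(X,d)` be a metric space, `G` a group acting on `X` by isometries,
and `V : X → ℝ` a continuous, nonnegative, `G`-invariant function whose zero set
`Γ = {u | V u = 0}` is nonempty.  Assume every sequence `(u n)` with `V (u n) → 0` is
`G`-compact.  Then for every sequence `(u n)` in `X`:
`V (u n) → 0` if and only if `d(u n, Γ) → 0`. -/
theorem vanishing_iff_dist_tendsto_zero {X G : Type*} [MetricSpace X]
    [Group G] [MulAction G X]
    (hiso : ∀ g : G, Isometry (fun x : X => g • x))
    (V : X → ℝ) (hVcont : Continuous V) (hVnonneg : ∀ u : X, 0 ≤ V u)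
    (hVinv : ∀ (g : G) (u : X), V (g • u) = V u)
    (Γ : Set X) (hΓ : Γ = {u : X | V u = 0}) (hΓne : Γ.Nonempty)
    (hGc : ∀ u : ℕ → X, Tendsto (fun n => V (u n)) atTop (𝓝 0) →
      GCompactSeq (G := G) u) :
    ∀ u : ℕ → X,
      Tendsto (fun n => V (u n)) atTop (𝓝 0) ↔
        Tendsto (fun n => infDist (u n) Γ) atTop (𝓝 0) := by
  intro u
  constructor
  · intro hV
    by_contra hd
    obtain ⟨ε, hε, φ, hφ, hge⟩ :=
      exists_subseq_of_not_tendsto _ (fun n => infDist_nonneg) hd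
    have hV' : Tendsto (fun n => V (u (φ n))) atTop (𝓝 0) := hV.comp hφ.tendsto_atTop
    obtain ⟨ψ, hψ, g, x, hx⟩ := hGc (fun n => u (φ n)) hV'
    have hVx : V x = 0 := by
      have h1 : Tendsto (fun k => V (g k • u (φ (ψ k)))) atTop (𝓝 (V x)) :=
        (hVcont.tendsto x).comp hx
      have h2 : Tendsto (fun k => V (g k • u (φ (ψ k)))) atTop (𝓝 0) := by
        simpa [hVinv, Function.comp_def] using hV'.comp hψ.tendsto_atTop
      exact tendsto_nhds_unique h1 h2
    have key : ∀ k, ε ≤ dist (g k • u (φ (ψ k))) x := by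
      intro k
      have hmem : (g k)⁻¹ • x ∈ Γ := by
        rw [hΓ]; simp [Set.mem_setOf_eq, hVinv, hVx]
      calc ε ≤ infDist (u (φ (ψ k))) Γ := hge (ψ k)
        _ ≤ dist (u (φ (ψ k))) ((g k)⁻¹ • x) := infDist_le_dist_of_mem hmem
        _ = dist (g k • u (φ (ψ k))) (g k • (g k)⁻¹ • x) := ((hiso (g k)).dist_eq _ _).symm
        _ = dist (g k • u (φ (ψ k))) x := by rw [smul_inv_smul]
    have hd0 : Tendsto (fun k => dist (g k • u (φ (ψ k))) x) atTop (𝓝 0) :=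
      tendsto_iff_dist_tendsto_zero.mp hx
    linarith [ge_of_tendsto' hd0 key]
  · intro hd
    by_contra hV
    obtain ⟨ε, hε, φ, hφ, hge⟩ :=
      exists_subseq_of_not_tendsto _ (fun n => hVnonneg _) hV
    have hd' : Tendsto (fun n => infDist (u (φ n)) Γ) atTop (𝓝 0) := hd.comp hφ.tendsto_atTop
    have hch : ∀ n : ℕ, ∃ y ∈ Γ, dist (u (φ n)) y < infDist (u (φ n)) Γ + 1/(n+1) := by
      intro n
      have hlt : infDist (u (φ n)) Γ < infDist (u (φ n)) Γ + 1/(n+1) :=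
        lt_add_of_pos_right _ (by positivity)
      exact (infDist_lt_iff hΓne).mp hlt
    choose γ hγΓ hγd using hch
    have hγ0 : ∀ n, V (γ n) = 0 := fun n => by
      have := hγΓ n; rw [hΓ] at this; exact this
    have hdist0 : Tendsto (fun n => dist (u (φ n)) (γ n)) atTop (𝓝 0) := by
      apply squeeze_zero (fun n => dist_nonneg) (fun n => (hγd n).le)
      have h := hd'.add tendsto_one_div_add_atTop_nhds_zero_nat
      simpa using h
    have hVγ : Tendsto (fun n => V (γ n)) atTop (𝓝 0) := by
      simpa [hγ0] using (tendsto_const_nhds : Tendsto (fun _ : ℕ => (0:ℝ)) atTop (𝓝 0))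
    obtain ⟨ψ, hψ, g, x, hx⟩ := hGc γ hVγ
    have hVx : V x = 0 := by
      have h2 : Tendsto (fun k => V (g k • γ (ψ k))) atTop (𝓝 (V x)) :=
        (hVcont.tendsto x).comp hx
      have h3 : Tendsto (fun k => V (g k • γ (ψ k))) atTop (𝓝 0) := by
        simpa [hVinv, hγ0] using (tendsto_const_nhds : Tendsto (fun _ : ℕ => (0:ℝ)) atTop (𝓝 0))
      exact tendsto_nhds_unique h2 h3
    have hux : Tendsto (fun k => g k • u (φ (ψ k))) atTop (𝓝 x) := by
      rw [tendsto_iff_dist_tendsto_zero] at hx ⊢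
      have hbound : ∀ k, dist (g k • u (φ (ψ k))) x
          ≤ dist (u (φ (ψ k))) (γ (ψ k)) + dist (g k • γ (ψ k)) x := by
        intro k
        calc dist (g k • u (φ (ψ k))) x
            ≤ dist (g k • u (φ (ψ k))) (g k • γ (ψ k)) + dist (g k • γ (ψ k)) x :=
              dist_triangle _ _ _
          _ = dist (u (φ (ψ k))) (γ (ψ k)) + dist (g k • γ (ψ k)) x := by
              rw [(hiso (g k)).dist_eq]
      have hlim0 : Tendsto
          (fun k => dist (u (φ (ψ k))) (γ (ψ k)) + dist (g k • γ (ψ k)) x) atTop (𝓝 0) := by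
        have h := (hdist0.comp hψ.tendsto_atTop).add hx
        simpa using h
      exact squeeze_zero (fun k => dist_nonneg) hbound hlim0
    have hlim : Tendsto (fun k => V (u (φ (ψ k)))) atTop (𝓝 0) := by
      have h1 : Tendsto (fun k => V (g k • u (φ (ψ k)))) atTop (𝓝 (V x)) :=
        (hVcont.tendsto x).comp hux
      simpa [hVinv, hVx] using h1
    linarith [ge_of_tendsto' hlim (fun k => hge (ψ k))]
end

section
/- Let X be a normed space, E : X → ℝ and C : X → ℝ^l functionals such that E and u ↦ |C(u)| have the splitting property, let a ≥ 0 and s ≥ 1, and set Φ(u) = E(u) + 2a|C(u)|^s. Then for every ū ∈ X and every sequence (w_n) converging weakly to 0 such that lim_n E(w_n) and lim_n |C(w_n)| exist, the limit lim_n Φ(w_n) exists and liminf_n Φ(ū + w_n) ≥ Φ(ū) + lim_n Φ(w_n). -/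
open Filter Topology

lemma real_add_rpow_le {x y s : ℝ} (hx : 0 ≤ x) (hy : 0 ≤ y) (hs : 1 ≤ s) :
    x ^ s + y ^ s ≤ (x + y) ^ s := by
  lift x to NNReal using hx
  lift y to NNReal using hy
  have := NNReal.add_rpow_le_rpow_add x y hs
  exact_mod_cast this

/-- If `E` and `u ↦ |C u|` have the splitting property, `a ≥ 0`, `s ≥ 1`,
and `Φ u = E u + 2 a |C u|^s`, then for every `ubar` and every sequence `(w n)` weakly
converging to `0` such that `lim E (w n)` and `lim |C (w n)|` exist, `lim Φ (w n)`
exists and `liminf Φ (ubar + w n) ≥ Φ ubar + lim Φ (w n)`. -/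
theorem Phi_superadditive_splitting {X : Type*} [NormedAddCommGroup X] [NormedSpace ℝ X]
    {l : ℕ} (E : X → ℝ) (C : X → EuclideanSpace ℝ (Fin l))
    (a s : ℝ) (ha : 0 ≤ a) (hs : 1 ≤ s)
    (hE : SplittingProperty E) (hC : SplittingProperty (fun u => ‖C u‖))
    (Φ : X → ℝ) (hΦ : ∀ u : X, Φ u = E u + 2 * a * ‖C u‖ ^ s) :
    ∀ (ubar : X) (w : ℕ → X),
      (∀ f : X →L[ℝ] ℝ, Tendsto (fun n => f (w n)) atTop (𝓝 0)) →
      (∃ e₁ : ℝ, Tendsto (fun n => E (w n)) atTop (𝓝 e₁)) →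
      (∃ c₁ : ℝ, Tendsto (fun n => ‖C (w n)‖) atTop (𝓝 c₁)) →
      ∃ L : ℝ, Tendsto (fun n => Φ (w n)) atTop (𝓝 L) ∧
        Φ ubar + L ≤ liminf (fun n => Φ (ubar + w n)) atTop := by
  rintro ubar w hw ⟨e₁, he₁⟩ ⟨c₁, hc₁⟩
  have hc₁0 : 0 ≤ c₁ := le_of_tendsto_of_tendsto tendsto_const_nhds hc₁
    (Filter.Eventually.of_forall fun n => norm_nonneg _)
  have hspos : 0 < s := lt_of_lt_of_le one_pos hs
  have hrpow : ∀ {c : ℝ} {f : ℕ → ℝ}, Tendsto f atTop (𝓝 c) →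
      Tendsto (fun n => f n ^ s) atTop (𝓝 (c ^ s)) := by
    intro c f hf
    exact (Real.continuousAt_rpow_const c s (Or.inr hspos.le)).tendsto.comp hf
  -- limit of Φ (w n)
  have hΦw : Tendsto (fun n => Φ (w n)) atTop (𝓝 (e₁ + 2 * a * c₁ ^ s)) := by
    simp only [hΦ]
    exact he₁.add (tendsto_const_nhds.mul (hrpow hc₁))
  refine ⟨e₁ + 2 * a * c₁ ^ s, hΦw, ?_⟩
  -- E (ubar + w n) → E ubar + e₁
  have hEsplit := hE ubar w hw
  have hE2 : Tendsto (fun n => E (ubar + w n)) atTop (𝓝 (E ubar + e₁)) := by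
    have := hEsplit.add he₁
    simpa [sub_add_cancel, add_comm] using (this.add_const (E ubar))
  have hCsplit := hC ubar w hw
  have hC2 : Tendsto (fun n => ‖C (ubar + w n)‖) atTop (𝓝 (‖C ubar‖ + c₁)) := by
    have := hCsplit.add hc₁
    simpa [sub_add_cancel, add_comm] using (this.add_const ‖C ubar‖)
  have hΦ2 : Tendsto (fun n => Φ (ubar + w n)) atTop
      (𝓝 (E ubar + e₁ + 2 * a * (‖C ubar‖ + c₁) ^ s)) := by
    simp only [hΦ]
    exact hE2.add (tendsto_const_nhds.mul (hrpow hC2))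
  rw [hΦ2.liminf_eq, hΦ ubar]
  have key : ‖C ubar‖ ^ s + c₁ ^ s ≤ (‖C ubar‖ + c₁) ^ s :=
    real_add_rpow_le (norm_nonneg _) hc₁0 hs
  nlinarith [key]
end

section
/- Let X be a Banach space, E : X → ℝ and C : X → ℝ^l functionals, a ≥ 0, s ≥ 1 with E(u) + a|C(u)|^s ≥ 0 for all u and E(u_n) + a|C(u_n)|^s → ∞ whenever ‖u_n‖ → ∞, let ‖·‖_♯ be a seminorm on X, let δ > 0 and let J_δ(u) = E(u)/|C(u)| + δ(E(u) + 2a|C(u)|^s) on { u : C(u) ≠ 0 }, with j = inf J_δ finite. Assume there exist η > 0 and r > 0 such that E(u)/|C(u)| ≥ j + η for every u with C(u) ≠ 0 and ‖u‖_♯ < r. Then every minimizing sequence (u_n) of J_δ is bounded in X and satisfies ‖u_n‖_♯ ≥ r for all sufficiently large n. -/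
open Filter Topology

/-- With `E u + a |C u|^s ≥ 0` (coercivity (i)) and
`E (u n) + a |C (u n)|^s → ∞` whenever `‖u n‖ → ∞` (coercivity (ii)),
`J_δ u = E u / |C u| + δ (E u + 2 a |C u|^s)` with finite infimum `j`, and
`E u / |C u| ≥ j + η` whenever `C u ≠ 0` and `‖u‖_♯ < r`, every minimizing sequence of
`J_δ` is bounded in `X` and satisfies `‖u n‖_♯ ≥ r` for all sufficiently large `n`. -/
theorem minimizing_seq_bounded_and_sharp_norm_below {X : Type*}
    [NormedAddCommGroup X] [NormedSpace ℝ X] [CompleteSpace X] {l : ℕ}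
    (E : X → ℝ) (C : X → EuclideanSpace ℝ (Fin l))
    (a s : ℝ) (ha : 0 ≤ a) (hs : 1 ≤ s)
    (hcoer₁ : ∀ u : X, 0 ≤ E u + a * ‖C u‖ ^ s)
    (hcoer₂ : ∀ u : ℕ → X, Tendsto (fun n => ‖u n‖) atTop atTop →
      Tendsto (fun n => E (u n) + a * ‖C (u n)‖ ^ s) atTop atTop)
    (p : Seminorm ℝ X) (δ : ℝ) (hδ : 0 < δ)
    (J : X → ℝ)
    (hJ : ∀ u : X, J u = E u / ‖C u‖ + δ * (E u + 2 * a * ‖C u‖ ^ s))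
    (j : ℝ) (hj : IsGLB (J '' {u : X | C u ≠ 0}) j)
    (η r : ℝ) (hη : 0 < η) (hr : 0 < r)
    (hbelow : ∀ u : X, C u ≠ 0 → p u < r → j + η ≤ E u / ‖C u‖) :
    ∀ u : ℕ → X, (∀ n, C (u n) ≠ 0) → Tendsto (fun n => J (u n)) atTop (𝓝 j) →
      (∃ R : ℝ, ∀ n, ‖u n‖ ≤ R) ∧ (∀ᶠ n in atTop, r ≤ p (u n)) := by
  intro u hC htend
  have ht : ∀ n, (0:ℝ) < ‖C (u n)‖ := fun n => norm_pos_iff.mpr (hC n)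
  -- the penalty term is nonnegative
  have hpen : ∀ n, 0 ≤ δ * (E (u n) + 2 * a * ‖C (u n)‖ ^ s) := by
    intro n
    have h1 := hcoer₁ (u n)
    have h2 : 0 ≤ a * ‖C (u n)‖ ^ s :=
      mul_nonneg ha (Real.rpow_nonneg (ht n).le _)
    nlinarith
  constructor
  · -- boundedness
    obtain ⟨M, hM⟩ : ∃ M, ∀ n, J (u n) ≤ M := by
      obtain ⟨M, hM⟩ := htend.bddAbove_range
      exact ⟨M, fun n => hM ⟨n, rfl⟩⟩
    set B : ℝ := a * (max 1 (2/δ)) ^ (s - 1) with hB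
    have hmax1 : (0:ℝ) ≤ max 1 (2/δ) := le_trans zero_le_one (le_max_left _ _)
    have hB0 : 0 ≤ B := mul_nonneg ha (Real.rpow_nonneg hmax1 _)
    have hQbdd : ∀ n, E (u n) + a * ‖C (u n)‖ ^ s ≤ (M + B) / δ := by
      intro n
      set t : ℝ := ‖C (u n)‖ with htdef
      have htn : 0 < t := ht n
      have hpow : 0 ≤ t ^ (s - 1) := Real.rpow_nonneg htn.le _
      have hpows : 0 ≤ t ^ s := Real.rpow_nonneg htn.le _
      have hsplit : t ^ s = t * t ^ (s - 1) := by
        have h := Real.rpow_sub htn s 1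
        rw [Real.rpow_one] at h
        rw [h]
        field_simp
      -- lower bound on E / t
      have hE : -(a * t ^ s) ≤ E (u n) := by have := hcoer₁ (u n); linarith
      have hdiv : -(a * t ^ (s - 1)) ≤ E (u n) / t := by
        rw [le_div_iff₀ htn]
        calc -(a * t ^ (s - 1)) * t = -(a * (t * t ^ (s - 1))) := by ring
        _ = -(a * t ^ s) := by rw [← hsplit]
        _ ≤ E (u n) := hE
      have hJn := hM n
      rw [hJ (u n)] at hJn
      -- so  δ * (E + a t^s)  ≤ M + (a t^(s-1) - δ * a * t^s)
      have hkey : δ * (E (u n) + a * t ^ s) ≤ M + (a * t ^ (s - 1) - δ * (a * t ^ s)) := by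
        nlinarith [hJn, hdiv]
      have hcase : a * t ^ (s - 1) - δ * (a * t ^ s) ≤ B := by
        rcases le_or_gt t (2 / δ) with hle | hlt
        · have htle : t ≤ max 1 (2/δ) := le_trans hle (le_max_right _ _)
          have : t ^ (s - 1) ≤ (max 1 (2/δ)) ^ (s - 1) :=
            Real.rpow_le_rpow htn.le htle (by linarith)
          have h1 : a * t ^ (s - 1) ≤ B := mul_le_mul_of_nonneg_left this ha
          nlinarith [mul_nonneg (mul_nonneg hδ.le ha) hpows]
        · have h2 : 2 < δ * t := by
            rw [div_lt_iff₀ hδ] at hlt; linarith [hlt]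
          have h3 : a * t ^ (s - 1) * 2 ≤ a * t ^ (s - 1) * (δ * t) :=
            mul_le_mul_of_nonneg_left h2.le (mul_nonneg ha hpow)
          have h4 : δ * (a * t ^ s) = a * t ^ (s - 1) * (δ * t) := by rw [hsplit]; ring
          have h5 : 0 ≤ a * t ^ (s - 1) := mul_nonneg ha hpow
          linarith
      rw [le_div_iff₀' hδ]
      linarith
    by_contra hub
    push_neg at hub
    choose g hg using hub
    have hvnorm : Tendsto (fun k : ℕ => ‖u (g (k : ℝ))‖) atTop atTop :=
      tendsto_atTop_mono (fun k => (hg (k : ℝ)).le) tendsto_natCast_atTop_atTop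
    have hQtop := hcoer₂ (fun k : ℕ => u (g (k : ℝ))) hvnorm
    obtain ⟨k, hk⟩ := (hQtop.eventually (eventually_gt_atTop ((M + B) / δ))).exists
    exact absurd (hQbdd (g (k : ℝ))) (not_le.mpr hk)
  · -- eventually p (u n) ≥ r
    have hev : ∀ᶠ n in atTop, J (u n) < j + η :=
      htend.eventually_lt_const (by linarith)
    filter_upwards [hev] with n hn
    by_contra hpr
    push_neg at hpr
    have h1 := hbelow (u n) (hC n) hpr
    have h2 := hpen n
    rw [hJ (u n)] at hn
    linarith
end
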